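/- arXiv:1312.4155 — 5 statements merged into one kernel-verified Lean document; each statement's English description precedes it below -/
import Mathlib

section
/- Let ẋ = Ax + Bu (u ∈ U) be a linear control system on ℝⁿ and let ẋ = (A + BC)x + Bu (u ∈ U) be the system obtained by adding a linear feedback with an m×n matrix C. If D(T) and D̃(T) denote the respective reachable sets from the origin at time T, then the Banach–Mazur distance satisfies ρ(D(T), D̃(T)) = O(T) as T → 0; i.e., there exist constants c > 0, T₀ > 0 with ρ(D(T), D̃(T)) ≤ c·T for all 0 < T < T₀. -/
open MeasureTheory Matrix Set Filter Topology Pointwise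

/-- Support function of a set with respect to the dot product. -/
noncomputable def suppFn {ι : Type*} [Fintype ι] (Ω : Set (ι → ℝ)) (ξ : ι → ℝ) : ℝ :=
  sSup ((fun x => x ⬝ᵥ ξ) '' Ω)

/-- A centrally symmetric convex body: compact, convex, nonempty interior, `Ω = -Ω`. -/
def IsSymConvexBody {ι : Type*} [Fintype ι] (Ω : Set (ι → ℝ)) : Prop :=
  IsCompact Ω ∧ Convex ℝ Ω ∧ (interior Ω).Nonempty ∧ Ω = -Ω

/-- `t(Ω₁, Ω₂) = inf { t ≥ 1 : tΩ₁ ⊇ Ω₂ }`. -/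
noncomputable def bmFactor {ι : Type*} [Fintype ι] (Ω₁ Ω₂ : Set (ι → ℝ)) : ℝ :=
  sInf {t : ℝ | 1 ≤ t ∧ Ω₂ ⊆ t • Ω₁}

/-- The Banach–Mazur distance `ρ(Ω₁, Ω₂) = log (t(Ω₁,Ω₂) · t(Ω₂,Ω₁))`. -/
noncomputable def bmDist {ι : Type*} [Fintype ι] (Ω₁ Ω₂ : Set (ι → ℝ)) : ℝ :=
  Real.log (bmFactor Ω₁ Ω₂ * bmFactor Ω₂ Ω₁)

/-- Distance between shapes: `ρ(Sh Ω₁, Sh Ω₂) = inf over invertible g of ρ(g Ω₁, Ω₂)`. -/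
noncomputable def shapeDist {ι : Type*} [Fintype ι] [DecidableEq ι] (Ω₁ Ω₂ : Set (ι → ℝ)) : ℝ :=
  sInf {r : ℝ | ∃ g : Matrix ι ι ℝ, IsUnit g ∧ r = bmDist (g.mulVec '' Ω₁) Ω₂}

/-- The shape of a set: its orbit under the action of invertible matrices. -/
def shapeOrbit {ι : Type*} [Fintype ι] [DecidableEq ι] (Ω : Set (ι → ℝ)) :
    Set (Set (ι → ℝ)) :=
  {S | ∃ g : Matrix ι ι ℝ, IsUnit g ∧ S = g.mulVec '' Ω}

/-- Reachable set at time `T` from the origin of `ẋ = Ax + Bu`, `u(s) ∈ U`. -/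
noncomputable def reachable {ι κ : Type*} [Fintype ι] [DecidableEq ι] [Fintype κ]
    (A : Matrix ι ι ℝ) (B : Matrix ι κ ℝ) (U : Set (κ → ℝ)) (T : ℝ) : Set (ι → ℝ) :=
  { x | ∃ u : ℝ → κ → ℝ, Measurable u ∧ (∀ s, u s ∈ U) ∧
      x = ∫ s in (0:ℝ)..T, (NormedSpace.exp ((T - s) • A)) *ᵥ (B *ᵥ u s) }

/-- The Kalman controllability condition: the columns of `B, AB, …, A^{n-1}B` span `ℝⁿ`. -/
def Kalman {n m : ℕ} (A : Matrix (Fin n) (Fin n) ℝ) (B : Matrix (Fin n) (Fin m) ℝ) : Prop :=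
  Submodule.span ℝ (⋃ k ∈ Finset.range n, Set.range (A ^ k * B).mulVec) = ⊤


namespace FeedbackBMO
open NormedSpace

section LocalNorm
attribute [local instance] Matrix.linftyOpNormedRing Matrix.linftyOpNormedAlgebra
open NormedSpace
attribute [local instance] Matrix.linftyOpNormedRing Matrix.linftyOpNormedAlgebra

/-- `mulVec` with fixed matrix, as a continuous linear map. -/
noncomputable def mvL {a b : ℕ} (M : Matrix (Fin a) (Fin b) ℝ) :
    (Fin b → ℝ) →L[ℝ] (Fin a → ℝ) :=
  LinearMap.toContinuousLinearMap M.mulVecLin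

lemma mvL_apply {a b : ℕ} (M : Matrix (Fin a) (Fin b) ℝ) (v : Fin b → ℝ) :
    mvL M v = M *ᵥ v := rfl

/-- `mulVec` with fixed vector, as a continuous linear map in the matrix. -/
noncomputable def mvR {a b : ℕ} (v : Fin b → ℝ) :
    Matrix (Fin a) (Fin b) ℝ →L[ℝ] (Fin a → ℝ) :=
  LinearMap.toContinuousLinearMap
    { toFun := fun M => M *ᵥ v
      map_add' := fun M N => Matrix.add_mulVec M N v
      map_smul' := fun c M => Matrix.smul_mulVec c M v }

lemma mvR_apply {a b : ℕ} (v : Fin b → ℝ) (M : Matrix (Fin a) (Fin b) ℝ) :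
    mvR v M = M *ᵥ v := rfl

lemma continuous_mulVec_pair {a b : ℕ} :
    Continuous fun p : Matrix (Fin a) (Fin b) ℝ × (Fin b → ℝ) => p.1 *ᵥ p.2 := by
  apply continuous_pi; intro i
  simp only [Matrix.mulVec, dotProduct]
  exact continuous_finset_sum _ fun j _ =>
    (((continuous_apply j).comp ((continuous_apply i).comp continuous_fst)).mul
      ((continuous_apply j).comp continuous_snd))

lemma continuous_expSmul {N : ℕ} (X : Matrix (Fin N) (Fin N) ℝ) :
    Continuous fun t : ℝ => exp (t • X) :=
  NormedSpace.exp_continuous.comp (continuous_id.smul continuous_const)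

lemma expSmul_sub {N : ℕ} (X : Matrix (Fin N) (Fin N) ℝ) (a b : ℝ) :
    exp ((a - b) • X) = exp (a • X) * exp (b • (-X)) := by
  have h : (a - b) • X = a • X + b • (-X) := by
    rw [smul_neg, ← neg_smul, ← add_smul]; ring_nf
  rw [h]; exact NormedSpace.exp_add_of_commute
    (((Commute.refl X).neg_right.smul_left a).smul_right b)

lemma expSmul_mul_neg {N : ℕ} (X : Matrix (Fin N) (Fin N) ℝ) (a : ℝ) :
    exp (a • X) * exp (a • (-X)) = 1 := by
  have h := NormedSpace.exp_add_of_commute (((Commute.refl X).neg_right.smul_left a).smul_right a)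
  rw [smul_neg, add_neg_cancel, NormedSpace.exp_zero] at h
  rw [smul_neg]; exact h.symm

lemma hasDerivAt_M {N : ℕ} (A Y : Matrix (Fin N) (Fin N) ℝ) (t : ℝ) :
    HasDerivAt (fun s : ℝ => exp (s • (-A)) * exp (s • Y))
      (exp (t • (-A)) * ((Y - A) * exp (t • Y))) t := by
  have h1 := hasDerivAt_exp_smul_const (-A) t
  have h2 := hasDerivAt_exp_smul_const' Y t
  refine (h1.mul h2).congr_deriv ?_
  change exp (t • -A) * -A * exp (t • Y) + exp (t • -A) * (Y * exp (t • Y)) = _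
  noncomm_ring

lemma boundAux {N P : ℕ} (Z : Matrix (Fin N) (Fin N) ℝ) (B : Matrix (Fin N) (Fin P) ℝ)
    (S R : ℝ) :
    ∃ K, 0 ≤ K ∧ ∀ t : ℝ, |t| ≤ S → ∀ v : Fin P → ℝ, ‖v‖ ≤ R →
      ‖exp (t • Z) *ᵥ (B *ᵥ v)‖ ≤ K := by
  have hs : IsCompact (Icc (-S) S ×ˢ Metric.closedBall (0 : Fin P → ℝ) R) :=
    isCompact_Icc.prod (isCompact_closedBall _ _)
  have hc : Continuous (fun p : ℝ × (Fin P → ℝ) => exp (p.1 • Z) *ᵥ (B *ᵥ p.2)) := by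
    exact continuous_mulVec_pair.comp
      (((continuous_expSmul Z).comp continuous_fst).prodMk ((mvL B).continuous.comp continuous_snd))
  obtain ⟨K, hK⟩ := hs.exists_bound_of_continuousOn hc.continuousOn
  refine ⟨max K 0, le_max_right _ _, fun t ht v hv => ?_⟩
  exact (hK (t, v) ⟨abs_le.mp ht, Metric.mem_closedBall.mpr (by simpa using hv)⟩).trans
    (le_max_left _ _)

lemma II_bdd {N : ℕ} {f : ℝ → Fin N → ℝ} (hf : AEStronglyMeasurable f volume)
    {K : ℝ} {a b : ℝ} (hK : ∀ s ∈ Set.uIoc a b, ‖f s‖ ≤ K) :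
    IntervalIntegrable f volume a b := by
  rw [intervalIntegrable_iff]
  have hinteg : IntegrableOn (fun _ : ℝ => K) (Set.uIoc a b) volume :=
    integrableOn_const measure_Ioc_lt_top.ne
  exact hinteg.mono' hf.restrict ((ae_restrict_iff' measurableSet_uIoc).mpr (ae_of_all _ hK))

lemma II_clm {N P : ℕ} (L : (Fin N → ℝ) →L[ℝ] (Fin P → ℝ)) {f : ℝ → Fin N → ℝ} {a b : ℝ}
    (h : IntervalIntegrable f volume a b) :
    IntervalIntegrable (fun x => L (f x)) volume a b := by
  rw [intervalIntegrable_iff] at h ⊢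
  exact L.integrable_comp h



lemma measurable_phi_mulVec {N : ℕ} {Φ : ℝ → Matrix (Fin N) (Fin N) ℝ}
    (hΦ : Continuous Φ) {g : ℝ → Fin N → ℝ} (hg : Measurable g) :
    Measurable fun q : ℝ × ℝ => Φ q.1 *ᵥ g q.2 := by
  rw [measurable_pi_iff]; intro i
  simp only [Matrix.mulVec, dotProduct]
  apply Finset.measurable_sum
  intro j _
  exact ((((continuous_apply j).comp ((continuous_apply i).comp hΦ)).measurable).comp
    measurable_fst).mul ((measurable_pi_apply j).comp (hg.comp measurable_snd))

lemma triangle_swap {N : ℕ} {T : ℝ} (hT : 0 ≤ T) {Φ : ℝ → Matrix (Fin N) (Fin N) ℝ}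
    (hΦ : Continuous Φ) {g : ℝ → Fin N → ℝ} (hg : Measurable g) {K : ℝ} (hK0 : 0 ≤ K)
    (hK : ∀ s ∈ Set.Ioc 0 T, ∀ r ∈ Set.Ioc 0 T, ‖Φ s *ᵥ g r‖ ≤ K) :
    (∫ s in (0:ℝ)..T, ∫ r in (0:ℝ)..s, Φ s *ᵥ g r) =
      ∫ r in (0:ℝ)..T, ∫ s in r..T, Φ s *ᵥ g r := by
  set μ : Measure ℝ := volume.restrict (Set.Ioc 0 T) with hμ
  haveI : IsFiniteMeasure μ := ⟨by
    rw [hμ, Measure.restrict_apply_univ]; exact measure_Ioc_lt_top⟩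
  set F : ℝ × ℝ → (Fin N → ℝ) :=
    ({q : ℝ × ℝ | q.2 ≤ q.1}).indicator (fun q => Φ q.1 *ᵥ g q.2) with hF
  have hmeas : Measurable fun q : ℝ × ℝ => Φ q.1 *ᵥ g q.2 := measurable_phi_mulVec hΦ hg
  have hsetm : MeasurableSet {q : ℝ × ℝ | q.2 ≤ q.1} :=
    measurableSet_le measurable_snd measurable_fst
  have hFmeas : Measurable F := hmeas.indicator hsetm
  have hFint : Integrable F (μ.prod μ) := by
    refine Integrable.mono' (integrable_const K) hFmeas.aestronglyMeasurable ?_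
    have hprod : μ.prod μ = (volume.prod volume).restrict (Set.Ioc 0 T ×ˢ Set.Ioc 0 T) :=
      Measure.prod_restrict _ _
    rw [hprod]
    refine (ae_restrict_iff' (measurableSet_Ioc.prod measurableSet_Ioc)).mpr
      (ae_of_all _ fun q hq => ?_)
    rw [hF]
    by_cases hle : q ∈ {q : ℝ × ℝ | q.2 ≤ q.1}
    · rw [Set.indicator_of_mem hle]
      exact hK q.1 hq.1 q.2 hq.2
    · rw [Set.indicator_of_notMem hle]; simpa using hK0
  have stepA : (∫ s in (0:ℝ)..T, ∫ r in (0:ℝ)..s, Φ s *ᵥ g r) = ∫ s, ∫ r, F (s, r) ∂μ ∂μ := by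
    rw [intervalIntegral.integral_of_le hT]
    refine setIntegral_congr_fun measurableSet_Ioc (fun s hs => ?_)
    have h1 : ∀ r, F (s, r) = (Set.Iic s).indicator (fun r => Φ s *ᵥ g r) r := by
      intro r
      simp [hF, Set.indicator_apply, Set.mem_Iic]
    have hseteq : Set.Iic s ∩ Set.Ioc 0 T = Set.Ioc 0 s := by
      ext r
      simp only [Set.mem_Ioc, Set.mem_inter_iff, Set.mem_Iic]
      constructor
      · rintro ⟨h1', h2', _⟩; exact ⟨h2', h1'⟩
      · rintro ⟨h1', h2'⟩; exact ⟨h2', h1', h2'.trans hs.2⟩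
    calc ∫ r in (0:ℝ)..s, Φ s *ᵥ g r = ∫ r in Set.Ioc (0:ℝ) s, Φ s *ᵥ g r := by
          rw [intervalIntegral.integral_of_le hs.1.le]
      _ = ∫ r in Set.Iic s, Φ s *ᵥ g r ∂μ := by
          rw [hμ, Measure.restrict_restrict measurableSet_Iic, hseteq]
      _ = ∫ r, (Set.Iic s).indicator (fun r => Φ s *ᵥ g r) r ∂μ := by
          rw [integral_indicator measurableSet_Iic]
      _ = ∫ r, F (s, r) ∂μ := by simp_rw [h1]
  have stepC : (∫ r in (0:ℝ)..T, ∫ s in r..T, Φ s *ᵥ g r) = ∫ r, ∫ s, F (s, r) ∂μ ∂μ := by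
    rw [intervalIntegral.integral_of_le hT]
    refine setIntegral_congr_fun measurableSet_Ioc (fun r hr => ?_)
    have h1 : ∀ s, F (s, r) = (Set.Ici r).indicator (fun s => Φ s *ᵥ g r) s := by
      intro s
      simp [hF, Set.indicator_apply, Set.mem_Ici]
    have hseteq : Set.Ici r ∩ Set.Ioc 0 T = Set.Icc r T := by
      ext s
      simp only [Set.mem_Icc, Set.mem_inter_iff, Set.mem_Ici, Set.mem_Ioc]
      constructor
      · rintro ⟨h1', _, h2'⟩; exact ⟨h1', h2'⟩
      · rintro ⟨h1', h2'⟩; exact ⟨h1', hr.1.trans_le h1', h2'⟩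
    calc ∫ s in r..T, Φ s *ᵥ g r = ∫ s in Set.Ioc r T, Φ s *ᵥ g r := by
          rw [intervalIntegral.integral_of_le hr.2]
      _ = ∫ s in Set.Icc r T, Φ s *ᵥ g r := integral_Icc_eq_integral_Ioc.symm
      _ = ∫ s in Set.Ici r, Φ s *ᵥ g r ∂μ := by
          rw [hμ, Measure.restrict_restrict measurableSet_Ici, hseteq]
      _ = ∫ s, (Set.Ici r).indicator (fun s => Φ s *ᵥ g r) s ∂μ := by
          rw [integral_indicator measurableSet_Ici]
      _ = ∫ s, F (s, r) ∂μ := by simp_rw [h1]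
  rw [stepA, stepC]
  exact integral_integral_swap hFint

variable {n m : ℕ} (Y : Matrix (Fin n) (Fin n) ℝ) (B : Matrix (Fin n) (Fin m) ℝ)

section g
variable {u : ℝ → Fin m → ℝ} (hu : Measurable u) {RU : ℝ} (hRU : ∀ s, ‖u s‖ ≤ RU)

include hu in
/-- measurability of the rotated control integrand -/
lemma g_meas : Measurable fun r : ℝ => exp (r • (-Y)) *ᵥ (B *ᵥ u r) := by
  rw [measurable_pi_iff]; intro i
  simp only [Matrix.mulVec, dotProduct]
  apply Finset.measurable_sum
  intro j _
  exact (((continuous_apply j).comp ((continuous_apply i).comp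
      (continuous_expSmul (-Y)))).measurable).mul
    (Finset.measurable_sum _ fun k _ => measurable_const.mul ((measurable_pi_apply k).comp hu))

include hu hRU in
lemma g_ii (a b' : ℝ) :
    IntervalIntegrable (fun r : ℝ => exp (r • (-Y)) *ᵥ (B *ᵥ u r)) volume a b' := by
  obtain ⟨K, -, hK⟩ := boundAux (-Y) B (max |a| |b'|) RU
  refine II_bdd (g_meas Y B hu).aestronglyMeasurable (K := K) (fun s hs => ?_)
  refine hK s ?_ (u s) (hRU s)
  rcases hs with hs
  have h1 : min a b' < s := hs.1
  have h2 : s ≤ max a b' := hs.2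
  rw [abs_le]
  constructor
  · calc -(max |a| |b'|) ≤ min a b' := by
          rcases le_total a b' with h | h
          · simp [min_eq_left h]; calc -(max |a| |b'|) ≤ -|a| := by simp [neg_le_neg_iff]
              _ ≤ a := neg_abs_le a
          · simp [min_eq_right h]; calc -(max |a| |b'|) ≤ -|b'| := by simp
              _ ≤ b' := neg_abs_le b'
      _ ≤ s := h1.le
  · calc s ≤ max a b' := h2
      _ ≤ max |a| |b'| := max_le_max (le_abs_self a) (le_abs_self b')

include hu hRU in
/-- the trajectory in rotated coordinates -/
lemma xs_eq (t : ℝ) :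
    (∫ r in (0:ℝ)..t, exp ((t - r) • Y) *ᵥ (B *ᵥ u r)) =
      exp (t • Y) *ᵥ (∫ r in (0:ℝ)..t, exp (r • (-Y)) *ᵥ (B *ᵥ u r)) := by
  have h1 : ∀ r, exp ((t - r) • Y) *ᵥ (B *ᵥ u r)
      = mvL (exp (t • Y)) (exp (r • (-Y)) *ᵥ (B *ᵥ u r)) := by
    intro r
    rw [mvL_apply, Matrix.mulVec_mulVec (B *ᵥ u r) (exp (t • Y)) (exp (r • (-Y))), ← expSmul_sub]
  simp_rw [h1]
  rw [ContinuousLinearMap.intervalIntegral_comp_comm _ (g_ii Y B hu hRU 0 t), mvL_apply]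
end g

lemma continuous_mvL {a b : ℕ} : Continuous fun M : Matrix (Fin a) (Fin b) ℝ => mvL M := by
  let L : Matrix (Fin a) (Fin b) ℝ →ₗ[ℝ] ((Fin b → ℝ) →L[ℝ] (Fin a → ℝ)) :=
    { toFun := mvL
      map_add' := fun M N => by ext v; simp [mvL_apply, Matrix.add_mulVec]
      map_smul' := fun c M => by ext v; simp [mvL_apply, Matrix.smul_mulVec] }
  exact L.continuous_of_finiteDimensional

variable (A : Matrix (Fin n) (Fin n) ℝ) (C : Matrix (Fin m) (Fin n) ℝ)

lemma key {u : ℝ → Fin m → ℝ} (hu : Measurable u) {RU : ℝ} (hRU : ∀ s, ‖u s‖ ≤ RU)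
    {T : ℝ} (hT : 0 ≤ T) :
    (∫ s in (0:ℝ)..T, exp ((T - s) • (A + B * C)) *ᵥ (B *ᵥ u s)) =
      ∫ s in (0:ℝ)..T, exp ((T - s) • A) *ᵥ
        (B *ᵥ u s + (B * C) *ᵥ
          (∫ r in (0:ℝ)..s, exp ((s - r) • (A + B * C)) *ᵥ (B *ᵥ u r))) := by
  set Y : Matrix (Fin n) (Fin n) ℝ := A + B * C with hY
  set g : ℝ → Fin n → ℝ := fun r => exp (r • (-Y)) *ᵥ (B *ᵥ u r) with hg
  set gA : ℝ → Fin n → ℝ := fun r => exp (r • (-A)) *ᵥ (B *ᵥ u r) with hgA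
  set w : ℝ → Fin n → ℝ := fun s => ∫ r in (0:ℝ)..s, g r with hw
  set M : ℝ → Matrix (Fin n) (Fin n) ℝ := fun s => exp (s • (-A)) * exp (s • Y) with hM
  set M' : ℝ → Matrix (Fin n) (Fin n) ℝ :=
    fun s => exp (s • (-A)) * ((B * C) * exp (s • Y)) with hM'
  have hgm : Measurable g := g_meas Y B hu
  have hgii : ∀ a b', IntervalIntegrable g volume a b' := fun a b' => g_ii Y B hu hRU a b'
  have hgAii : ∀ a b', IntervalIntegrable gA volume a b' := fun a b' => g_ii A B hu hRU a b'
  have hw_cont : Continuous w := intervalIntegral.continuous_primitive hgii 0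
  have hMd : ∀ s, HasDerivAt M (M' s) s := by
    intro s
    have h := hasDerivAt_M A Y s
    rw [hY, add_sub_cancel_left] at h
    exact h
  have hM'c : Continuous M' :=
    (continuous_expSmul (-A)).mul (continuous_const.mul (continuous_expSmul Y))
  have hMwc : Continuous fun s => M' s *ᵥ w s :=
    continuous_mulVec_pair.comp (hM'c.prodMk hw_cont)
  have hx : ∀ s : ℝ, (∫ r in (0:ℝ)..s, exp ((s - r) • Y) *ᵥ (B *ᵥ u r))
      = exp (s • Y) *ᵥ w s := fun s => xs_eq Y B hu hRU s
  -- bound for triangle swap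
  obtain ⟨K1, hK10, hK1⟩ := boundAux (-Y) B T RU
  obtain ⟨KM, hKM⟩ := isCompact_Icc.exists_bound_of_continuousOn
    ((continuous_mvL.comp hM'c).continuousOn (s := Icc (0:ℝ) T))
  have hbound : ∀ s ∈ Set.Ioc (0:ℝ) T, ∀ r ∈ Set.Ioc (0:ℝ) T,
      ‖M' s *ᵥ g r‖ ≤ max (KM * K1) 0 := by
    intro s hs r hr
    have h1 : ‖g r‖ ≤ K1 := hK1 r (by rw [abs_le]; exact ⟨by linarith [hr.1], hr.2⟩) (u r) (hRU r)
    have h2 : ‖mvL (M' s)‖ ≤ KM := hKM s ⟨hs.1.le, hs.2⟩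
    have h3 : ‖M' s *ᵥ g r‖ = ‖mvL (M' s) (g r)‖ := by rw [mvL_apply]
    rw [h3]
    refine le_max_of_le_left ?_
    calc ‖mvL (M' s) (g r)‖ ≤ ‖mvL (M' s)‖ * ‖g r‖ := (mvL (M' s)).le_opNorm _
      _ ≤ KM * K1 := mul_le_mul h2 h1 (norm_nonneg _) ((norm_nonneg _).trans h2)
  -- the first integrand rewritten
  have hf1 : ∀ s : ℝ, exp ((T - s) • A) *ᵥ (B *ᵥ u s) = mvL (exp (T • A)) (gA s) := by
    intro s
    rw [mvL_apply, hgA]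
    rw [Matrix.mulVec_mulVec (B *ᵥ u s) (exp (T • A)) (exp (s • (-A))), ← expSmul_sub]
  have hIIf1 : IntervalIntegrable (fun s => mvL (exp (T • A)) (gA s)) volume 0 T :=
    II_clm _ (hgAii 0 T)
  have hIIf2 : IntervalIntegrable (fun s => mvL (exp (T • A)) (M' s *ᵥ w s)) volume 0 T :=
    (((mvL (exp (T • A))).continuous.comp hMwc)).intervalIntegrable _ _
  -- Step 1 : rewrite the RHS integrand
  have step1 : (∫ s in (0:ℝ)..T, exp ((T - s) • A) *ᵥ
        (B *ᵥ u s + (B * C) *ᵥ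
          (∫ r in (0:ℝ)..s, exp ((s - r) • Y) *ᵥ (B *ᵥ u r))))
      = ∫ s in (0:ℝ)..T,
          (mvL (exp (T • A)) (gA s) + mvL (exp (T • A)) (M' s *ᵥ w s)) := by
    refine intervalIntegral.integral_congr (fun s _ => ?_)
    rw [hx s, Matrix.mulVec_add, hf1 s]
    congr 1
    simp only [mvL_apply, Matrix.mulVec_mulVec, expSmul_sub, hM']
    congr 1
    noncomm_ring
  -- J computation
  have hMgr_cont : ∀ r, Continuous fun s => M' s *ᵥ g r := fun r =>
    continuous_mulVec_pair.comp (hM'c.prodMk continuous_const)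
  have step6 : ∀ r : ℝ, (∫ s in r..T, M' s *ᵥ g r) = M T *ᵥ g r - M r *ᵥ g r := by
    intro r
    refine intervalIntegral.integral_eq_sub_of_hasDerivAt (f := fun s => M s *ᵥ g r)
      (f' := fun s => M' s *ᵥ g r) (fun s _ => ?_) ((hMgr_cont r).intervalIntegrable _ _)
    have h := (mvR (g r)).hasFDerivAt.comp_hasDerivAt s (hMd s)
    simp only [Function.comp_def] at h
    exact h
  have hMrgr : ∀ r : ℝ, M r *ᵥ g r = gA r := by
    intro r
    rw [hM, hg, hgA]
    simp only [Matrix.mulVec_mulVec]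
    have h9 : exp (r • -A) * exp (r • Y) * (exp (r • -Y) * B) = exp (r • -A) * B := by
      rw [← Matrix.mul_assoc, Matrix.mul_assoc (exp (r • -A)), expSmul_mul_neg Y r, mul_one]
    rw [h9]
  have hIIMTg : IntervalIntegrable (fun r => M T *ᵥ g r) volume 0 T := by
    have : (fun r => M T *ᵥ g r) = fun r => mvL (M T) (g r) := by
      funext r; rw [mvL_apply]
    rw [this]; exact II_clm _ (hgii 0 T)
  have stepJ : (∫ s in (0:ℝ)..T, M' s *ᵥ w s) = M T *ᵥ w T - ∫ r in (0:ℝ)..T, gA r := by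
    have e4 : (∫ s in (0:ℝ)..T, M' s *ᵥ w s)
        = ∫ s in (0:ℝ)..T, ∫ r in (0:ℝ)..s, M' s *ᵥ g r := by
      refine intervalIntegral.integral_congr (fun s _ => ?_)
      have : ∀ r, M' s *ᵥ g r = mvL (M' s) (g r) := fun r => (mvL_apply _ _).symm
      simp only [this]
      rw [ContinuousLinearMap.intervalIntegral_comp_comm _ (hgii 0 s), mvL_apply]
    rw [e4, triangle_swap hT hM'c hgm (le_max_right _ _) hbound]
    have e5 : (∫ r in (0:ℝ)..T, ∫ s in r..T, M' s *ᵥ g r)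
        = ∫ r in (0:ℝ)..T, (M T *ᵥ g r - M r *ᵥ g r) := by
      refine intervalIntegral.integral_congr (fun r _ => ?_)
      exact step6 r
    rw [e5]
    have e6 : (∫ r in (0:ℝ)..T, (M T *ᵥ g r - M r *ᵥ g r))
        = (∫ r in (0:ℝ)..T, M T *ᵥ g r) - ∫ r in (0:ℝ)..T, M r *ᵥ g r := by
      refine intervalIntegral.integral_sub hIIMTg ?_
      have : (fun r => M r *ᵥ g r) = gA := funext hMrgr
      rw [this]; exact hgAii 0 T
    rw [e6]
    have e7 : (∫ r in (0:ℝ)..T, M T *ᵥ g r) = M T *ᵥ w T := by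
      have : ∀ r, M T *ᵥ g r = mvL (M T) (g r) := fun r => (mvL_apply _ _).symm
      simp only [this]
      rw [ContinuousLinearMap.intervalIntegral_comp_comm _ (hgii 0 T), mvL_apply]
    rw [e7]
    congr 1
    exact intervalIntegral.integral_congr fun r _ => hMrgr r
  -- put everything together
  rw [hx T]
  rw [step1, intervalIntegral.integral_add hIIf1 hIIf2,
    ContinuousLinearMap.intervalIntegral_comp_comm _ (hMwc.intervalIntegrable 0 T),
    stepJ, map_sub]
  have e8 : mvL (exp (T • A)) (M T *ᵥ w T) = exp (T • Y) *ᵥ w T := by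
    rw [mvL_apply, Matrix.mulVec_mulVec (w T) (exp (T • A)) (M T), hM]
    have h10 : exp (T • A) * (exp (T • -A) * exp (T • Y)) = exp (T • Y) := by
      rw [← mul_assoc, expSmul_mul_neg A T, one_mul]
    rw [h10]
  have e9 : mvL (exp (T • A)) (∫ r in (0:ℝ)..T, gA r)
      = ∫ r in (0:ℝ)..T, mvL (exp (T • A)) (gA r) :=
    (ContinuousLinearMap.intervalIntegral_comp_comm _ (hgAii 0 T)).symm
  rw [e8, e9]
  abel

lemma reach_incl {n m : ℕ} (A : Matrix (Fin n) (Fin n) ℝ) (B : Matrix (Fin n) (Fin m) ℝ)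
    (C : Matrix (Fin m) (Fin n) ℝ) (U : Set (Fin m → ℝ)) (hU : IsSymConvexBody U) :
    ∃ c > (0:ℝ), ∀ T : ℝ, 0 < T → T ≤ 1 →
      reachable (A + B * C) B U T ⊆ (1 + c * T) • reachable A B U T := by
  obtain ⟨hcomp, hconv, hint, hsymm⟩ := hU
  obtain ⟨x₀, hx₀⟩ := hint
  obtain ⟨ε, hε, hball⟩ : ∃ ε > 0, Metric.ball x₀ ε ⊆ U := by
    rcases Metric.isOpen_iff.mp isOpen_interior x₀ hx₀ with ⟨ε, hε, h⟩
    exact ⟨ε, hε, h.trans interior_subset⟩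
  have hball0 : ∀ y : Fin m → ℝ, ‖y‖ < ε → y ∈ U := by
    intro y hy
    have h1 : x₀ + y ∈ U := hball (by rw [Metric.mem_ball, dist_eq_norm]; simpa using hy)
    have h2 : x₀ - y ∈ U := hball (by rw [Metric.mem_ball, dist_eq_norm]; simpa using hy)
    have h3 : y - x₀ ∈ U := by
      rw [hsymm, Set.mem_neg, neg_sub]; exact h2
    have h4 := hconv h1 h3 (by norm_num : (0:ℝ) ≤ 1/2) (by norm_num : (0:ℝ) ≤ 1/2) (by norm_num)
    have h5 : (1/2 : ℝ) • (x₀ + y) + (1/2 : ℝ) • (y - x₀) = y := by module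
    rwa [h5] at h4
  obtain ⟨RU, hRU⟩ := hcomp.isBounded.exists_norm_le
  obtain ⟨K1, hK10, hK1⟩ := boundAux (A + B * C) B 1 RU
  set KC := ‖mvL C‖ with hKC
  have hKC0 : 0 ≤ KC := norm_nonneg _
  set c := (KC * K1 + 1) / ε with hc
  have hnum : (0:ℝ) < KC * K1 + 1 := by nlinarith
  have hc0 : 0 < c := div_pos hnum hε
  refine ⟨c, hc0, fun T hT0 hT1 x hx => ?_⟩
  obtain ⟨w, hwm, hwU, hxeq⟩ := hx
  set Y : Matrix (Fin n) (Fin n) ℝ := A + B * C with hY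
  have hRUg : ∀ s, ‖w s‖ ≤ RU := fun s => hRU _ (hwU s)
  set xs : ℝ → Fin n → ℝ :=
    fun t => exp (t • Y) *ᵥ (∫ r in (0:ℝ)..t, exp (r • (-Y)) *ᵥ (B *ᵥ w r)) with hxs
  have hxs_cont : Continuous xs :=
    continuous_mulVec_pair.comp ((continuous_expSmul Y).prodMk
      (intervalIntegral.continuous_primitive (g_ii Y B hwm hRUg) 0))
  have hxs_bd : ∀ t, 0 ≤ t → t ≤ T → ‖xs t‖ ≤ K1 * T := by
    intro t h0 h1
    have hxst : xs t = ∫ r in (0:ℝ)..t, exp ((t - r) • Y) *ᵥ (B *ᵥ w r) :=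
      (xs_eq Y B hwm hRUg t).symm
    rw [hxst]
    have hb1 : ‖∫ r in (0:ℝ)..t, exp ((t - r) • Y) *ᵥ (B *ᵥ w r)‖ ≤ K1 * |t - 0| := by
      refine intervalIntegral.norm_integral_le_of_norm_le_const (fun r hr => ?_)
      rw [Set.uIoc_of_le h0] at hr
      refine hK1 (t - r) ?_ (w r) (hRUg r)
      rw [abs_le]
      constructor <;> [linarith [hr.2, hT1, hr.1]; linarith [hr.1, hr.2, hT1]]
    rw [sub_zero, abs_of_nonneg h0] at hb1
    calc ‖∫ r in (0:ℝ)..t, exp ((t - r) • Y) *ᵥ (B *ᵥ w r)‖ ≤ K1 * t := hb1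
      _ ≤ K1 * T := by nlinarith
  set τ : ℝ → ℝ := fun s => max 0 (min s T) with hτ
  have hτ_cont : Continuous τ := continuous_const.max (continuous_id.min continuous_const)
  have hτ0 : ∀ s, 0 ≤ τ s := fun s => le_max_left _ _
  have hτT : ∀ s, τ s ≤ T := fun s => max_le hT0.le (min_le_right _ _)
  have hτeq : ∀ s ∈ Set.uIcc (0:ℝ) T, τ s = s := by
    intro s hs
    rw [Set.uIcc_of_le hT0.le] at hs
    rw [hτ]; dsimp only
    rw [min_eq_left hs.2, max_eq_right hs.1]
  have hCxs : ∀ s : ℝ, ‖C *ᵥ xs (τ s)‖ ≤ KC * (K1 * T) := by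
    intro s
    have h1 : ‖mvL C (xs (τ s))‖ ≤ KC * ‖xs (τ s)‖ := (mvL C).le_opNorm _
    rw [mvL_apply] at h1
    exact h1.trans (mul_le_mul_of_nonneg_left (hxs_bd _ (hτ0 s) (hτT s)) hKC0)
  have hcT : 0 < c * T := mul_pos hc0 hT0
  set b : ℝ → Fin m → ℝ := fun s => (c * T)⁻¹ • (C *ᵥ xs (τ s)) with hb
  have hbU : ∀ s, b s ∈ U := by
    intro s
    apply hball0
    rw [hb]; dsimp only
    rw [norm_smul, Real.norm_eq_abs, abs_of_pos (inv_pos.2 hcT)]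
    have h2 : (c*T)⁻¹ * ‖C *ᵥ xs (τ s)‖ ≤ (c*T)⁻¹ * (KC*(K1*T)) :=
      mul_le_mul_of_nonneg_left (hCxs s) (inv_pos.2 hcT).le
    refine h2.trans_lt ?_
    rw [inv_mul_lt_iff₀ hcT]
    have he : ε * (c*T) = (KC*K1+1) * T := by
      rw [hc]; field_simp
    nlinarith [he]
  have h1cT : (0:ℝ) < 1 + c * T := by linarith
  set v : ℝ → Fin m → ℝ := fun s => (1 + c * T)⁻¹ • (w s + (c * T) • b s) with hv
  have hvU : ∀ s, v s ∈ U := by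
    intro s
    have h4 := hconv (hwU s) (hbU s) (inv_pos.2 h1cT).le
      (mul_nonneg (inv_pos.2 h1cT).le hcT.le) (by field_simp)
    rw [hv]; dsimp only
    rw [smul_add, smul_smul]
    exact h4
  have hb_cont : Continuous b := by
    show Continuous fun s => (c * T)⁻¹ • (C *ᵥ xs (τ s))
    have hcomp : Continuous fun s => C *ᵥ xs (τ s) := (mvL C).continuous.comp (hxs_cont.comp hτ_cont)
    exact hcomp.const_smul ((c * T)⁻¹)
  have hvm : Measurable v := by
    have h1 : Continuous fun s => (c*T) • b s := hb_cont.const_smul (c*T)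
    have h2 : Measurable fun s => w s + (c*T) • b s := hwm.add h1.measurable
    have h3 : Measurable ((1 + c*T)⁻¹ • fun s => w s + (c*T) • b s) := h2.const_smul _
    exact h3
  have hkey := key B A C hwm hRUg hT0.le
  refine Set.mem_smul_set.mpr
    ⟨∫ s in (0:ℝ)..T, exp ((T - s) • A) *ᵥ (B *ᵥ v s), ⟨v, hvm, hvU, rfl⟩, ?_⟩
  rw [hxeq, hkey, ← intervalIntegral.integral_smul]
  refine intervalIntegral.integral_congr (fun s hs => ?_)
  have hτs : τ s = s := hτeq s hs
  have hxr : (∫ r in (0:ℝ)..s, exp ((s - r) • Y) *ᵥ (B *ᵥ w r)) = xs s :=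
    xs_eq Y B hwm hRUg s
  rw [hxr, ← Matrix.mulVec_smul, ← Matrix.mulVec_smul]
  congr 1
  have hv1 : (1 + c*T) • v s = w s + (c*T) • b s := by
    rw [hv]; dsimp only
    rw [smul_smul, mul_inv_cancel₀ h1cT.ne', one_smul]
  rw [hv1, Matrix.mulVec_add]
  congr 1
  have hb1 : (c*T) • b s = C *ᵥ xs s := by
    rw [hb]; dsimp only
    rw [smul_inv_smul₀ hcT.ne', hτs]
  rw [hb1, Matrix.mulVec_mulVec]

end LocalNorm
lemma bmFactor_le {ι : Type*} [Fintype ι] {Ω₁ Ω₂ : Set (ι → ℝ)} {t : ℝ}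
    (h1 : 1 ≤ t) (h : Ω₂ ⊆ t • Ω₁) : bmFactor Ω₁ Ω₂ ≤ t :=
  csInf_le ⟨1, fun _ hx => hx.1⟩ ⟨h1, h⟩

lemma one_le_bmFactor {ι : Type*} [Fintype ι] {Ω₁ Ω₂ : Set (ι → ℝ)} {t : ℝ}
    (h1 : 1 ≤ t) (h : Ω₂ ⊆ t • Ω₁) : 1 ≤ bmFactor Ω₁ Ω₂ :=
  le_csInf ⟨t, h1, h⟩ fun _ hx => hx.1

end FeedbackBMO

/-- **Adding a linear feedback perturbs the reachable set by `O(T)`.**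
If `D(T)` and `D̃(T)` are the reachable sets of `ẋ = Ax + Bu` and of the feedback
system `ẋ = (A + BC)x + Bu` (`u ∈ U`, a centrally symmetric convex body), then
`ρ(D(T), D̃(T)) = O(T)` as `T → 0`. -/
theorem feedback_bmDist_bigO {n m : ℕ}
    (A : Matrix (Fin n) (Fin n) ℝ) (B : Matrix (Fin n) (Fin m) ℝ)
    (C : Matrix (Fin m) (Fin n) ℝ)
    (U : Set (Fin m → ℝ)) (hU : IsSymConvexBody U) :
    ∃ c > (0:ℝ), ∃ T₀ > (0:ℝ), ∀ T : ℝ, 0 < T → T < T₀ →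
      bmDist (reachable A B U T) (reachable (A + B * C) B U T) ≤ c * T := by
  obtain ⟨c₁, hc₁, h₁⟩ := FeedbackBMO.reach_incl A B C U hU
  obtain ⟨c₂, hc₂, h₂⟩ := FeedbackBMO.reach_incl (A + B * C) B (-C) U hU
  have hAC : A + B * C + B * -C = A := by
    rw [Matrix.mul_neg]; abel
  rw [hAC] at h₂
  set c := max c₁ c₂ with hc
  have hc0 : 0 < c := lt_max_of_lt_left hc₁
  refine ⟨2 * c, by linarith, 1, one_pos, fun T hT0 hT1 => ?_⟩
  set D₁ := reachable A B U T
  set D₂ := reachable (A + B * C) B U T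
  have hi₁ : D₂ ⊆ (1 + c₁ * T) • D₁ := h₁ T hT0 hT1.le
  have hi₂ : D₁ ⊆ (1 + c₂ * T) • D₂ := h₂ T hT0 hT1.le
  have e₁ : (1:ℝ) ≤ 1 + c₁ * T := by nlinarith
  have e₂ : (1:ℝ) ≤ 1 + c₂ * T := by nlinarith
  have f₁le : bmFactor D₁ D₂ ≤ 1 + c₁ * T := FeedbackBMO.bmFactor_le e₁ hi₁
  have f₂le : bmFactor D₂ D₁ ≤ 1 + c₂ * T := FeedbackBMO.bmFactor_le e₂ hi₂
  have f₁ge : 1 ≤ bmFactor D₁ D₂ := FeedbackBMO.one_le_bmFactor e₁ hi₁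
  have f₂ge : 1 ≤ bmFactor D₂ D₁ := FeedbackBMO.one_le_bmFactor e₂ hi₂
  have hcT1 : (1:ℝ) ≤ 1 + c * T := by nlinarith
  have hf₁ : bmFactor D₁ D₂ ≤ 1 + c * T :=
    f₁le.trans (by have : c₁ ≤ c := le_max_left _ _; nlinarith)
  have hf₂ : bmFactor D₂ D₁ ≤ 1 + c * T :=
    f₂le.trans (by have : c₂ ≤ c := le_max_right _ _; nlinarith)
  have hprod : bmFactor D₁ D₂ * bmFactor D₂ D₁ ≤ (1 + c * T) * (1 + c * T) :=
    mul_le_mul hf₁ hf₂ (by linarith) (by linarith)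
  have hpos : (0:ℝ) < bmFactor D₁ D₂ * bmFactor D₂ D₁ := by nlinarith
  calc bmDist D₁ D₂ = Real.log (bmFactor D₁ D₂ * bmFactor D₂ D₁) := rfl
    _ ≤ Real.log ((1 + c * T) * (1 + c * T)) := Real.log_le_log hpos hprod
    _ = Real.log (1 + c * T) + Real.log (1 + c * T) := by
        rw [Real.log_mul (by linarith) (by linarith)]
    _ ≤ c * T + c * T := by
        have h := Real.log_le_sub_one_of_pos (x := 1 + c * T) (by linarith)
        have h' : Real.log (1 + c * T) ≤ c * T := by linarith
        linarith
    _ = 2 * c * T := by ring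
end

section
/- The space of shapes of centrally symmetric convex bodies in ℝⁿ, i.e., the quotient of the space of centrally symmetric convex bodies by the action of GL(n, ℝ), equipped with the Banach–Mazur factormetric ρ(Sh Ω₁, Sh Ω₂) = inf over invertible g of ρ(gΩ₁, Ω₂), is a compact metric space. In particular, the factormetric is symmetric, satisfies the triangle inequality, vanishes exactly when the two bodies lie in the same GL(n, ℝ)-orbit, and every sequence of shapes has a convergent subsequence. -/
open MeasureTheory Matrix Set Filter Topology Pointwise

namespace ShapeAux

open Metric Bornology

variable {n : ℕ}

/-- A symmetric convex body is sandwiched between two centered balls. -/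
lemma body_radii {Ω : Set (Fin n → ℝ)} (h : IsSymConvexBody Ω) :
    ∃ r R : ℝ, 0 < r ∧ 0 < R ∧ closedBall 0 r ⊆ Ω ∧ Ω ⊆ closedBall 0 R := by
  obtain ⟨hc, hconv, ⟨x, hx⟩, hsym⟩ := h
  rw [mem_interior_iff_mem_nhds, Metric.mem_nhds_iff] at hx
  obtain ⟨ε, hε, hball⟩ := hx
  obtain ⟨R, hR0, hR⟩ := hc.isBounded.subset_closedBall_lt 0 0
  refine ⟨ε/2, R, by positivity, hR0, ?_, hR⟩
  intro v hv
  have hv' : ‖v‖ ≤ ε/2 := by simpa [dist_zero_right] using hv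
  have h1 : x + v ∈ Ω := hball (by
    simp only [Metric.mem_ball, dist_eq_norm, add_sub_cancel_left]
    linarith)
  have h2 : x - v ∈ Ω := hball (by
    simp only [Metric.mem_ball, dist_eq_norm]
    have : x - v - x = -v := by abel
    rw [this, norm_neg]; linarith)
  have h3 : -(x - v) ∈ Ω := by rw [hsym]; exact Set.neg_mem_neg.2 h2
  have hmid := hconv h1 h3 (by norm_num : (0:ℝ) ≤ 1/2) (by norm_num : (0:ℝ) ≤ 1/2)
    (by norm_num : (1/2 : ℝ) + 1/2 = 1)
  have heq : (1/2:ℝ) • (x + v) + (1/2:ℝ) • (-(x - v)) = v := by module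
  rwa [heq] at hmid

lemma body_zero_mem {Ω : Set (Fin n → ℝ)} (h : IsSymConvexBody Ω) : (0 : Fin n → ℝ) ∈ Ω := by
  obtain ⟨r, R, hr, hR, hball, -⟩ := body_radii h
  exact hball (by simpa using hr.le)

lemma bmSet_bddBelow (Ω₁ Ω₂ : Set (Fin n → ℝ)) :
    BddBelow {t : ℝ | 1 ≤ t ∧ Ω₂ ⊆ t • Ω₁} := ⟨1, fun _ h => h.1⟩

lemma bmSet_nonempty {Ω₁ Ω₂ : Set (Fin n → ℝ)} (h1 : IsSymConvexBody Ω₁)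
    (h2 : IsSymConvexBody Ω₂) : {t : ℝ | 1 ≤ t ∧ Ω₂ ⊆ t • Ω₁}.Nonempty := by
  obtain ⟨r, R, hr, hR, hball, -⟩ := body_radii h1
  obtain ⟨r', R', hr', hR', -, hsub'⟩ := body_radii h2
  refine ⟨max 1 (R'/r), le_max_left _ _, fun x hx => ?_⟩
  set t := max 1 (R'/r) with ht
  have ht0 : 0 < t := lt_of_lt_of_le one_pos (le_max_left _ _)
  refine ⟨t⁻¹ • x, hball ?_, smul_inv_smul₀ (ne_of_gt ht0) x⟩
  have hxR : ‖x‖ ≤ R' := by simpa [dist_zero_right] using hsub' hx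
  simp only [mem_closedBall, dist_zero_right, norm_smul, norm_inv, Real.norm_eq_abs,
    abs_of_pos ht0]
  rw [inv_mul_le_iff₀ ht0]
  calc ‖x‖ ≤ R' := hxR
    _ = (R'/r) * r := by field_simp
    _ ≤ t * r := by have := le_max_right 1 (R'/r); nlinarith

lemma one_le_bmFactor {Ω₁ Ω₂ : Set (Fin n → ℝ)} (h1 : IsSymConvexBody Ω₁)
    (h2 : IsSymConvexBody Ω₂) : 1 ≤ bmFactor Ω₁ Ω₂ :=
  le_csInf (bmSet_nonempty h1 h2) fun _ h => h.1

lemma bmFactor_le {Ω₁ Ω₂ : Set (Fin n → ℝ)} {t : ℝ} (h1 : 1 ≤ t) (h : Ω₂ ⊆ t • Ω₁) :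
    bmFactor Ω₁ Ω₂ ≤ t := csInf_le (bmSet_bddBelow _ _) ⟨h1, h⟩

lemma bmFactor_subset {Ω₁ Ω₂ : Set (Fin n → ℝ)} (h1 : IsSymConvexBody Ω₁)
    (h2 : IsSymConvexBody Ω₂) : Ω₂ ⊆ bmFactor Ω₁ Ω₂ • Ω₁ := by
  obtain ⟨u, -, hu, humem⟩ := exists_seq_tendsto_sInf (bmSet_nonempty h1 h2) (bmSet_bddBelow _ _)
  intro x hx
  have hpos : 0 < bmFactor Ω₁ Ω₂ := lt_of_lt_of_le one_pos (one_le_bmFactor h1 h2)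
  have hy : ∀ k, (u k)⁻¹ • x ∈ Ω₁ := fun k => by
    obtain ⟨y, hy, hyx⟩ := (humem k).2 hx
    have hne : (u k) ≠ 0 := ne_of_gt (lt_of_lt_of_le one_pos (humem k).1)
    rw [← hyx, inv_smul_smul₀ hne]; exact hy
  have hlim : Tendsto (fun k => (u k)⁻¹ • x) atTop (𝓝 ((bmFactor Ω₁ Ω₂)⁻¹ • x)) :=
    (hu.inv₀ (ne_of_gt hpos)).smul tendsto_const_nhds
  have hmem := h1.1.isClosed.mem_of_tendsto hlim (Eventually.of_forall hy)
  exact ⟨_, hmem, smul_inv_smul₀ (ne_of_gt hpos) x⟩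

lemma bmFactor_self {Ω : Set (Fin n → ℝ)} (h : IsSymConvexBody Ω) : bmFactor Ω Ω = 1 :=
  le_antisymm (bmFactor_le le_rfl (by rw [one_smul])) (one_le_bmFactor h h)

section MulVec

variable {g : Matrix (Fin n) (Fin n) ℝ}

lemma gdet (hg : IsUnit g) : IsUnit g.det := (Matrix.isUnit_iff_isUnit_det g).1 hg

lemma isUnit_inv (hg : IsUnit g) : IsUnit g⁻¹ := Matrix.isUnit_nonsing_inv_iff.2 hg

lemma inv_mulVec_mulVec (hg : IsUnit g) (x : Fin n → ℝ) : g⁻¹ *ᵥ (g *ᵥ x) = x := by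
  rw [Matrix.mulVec_mulVec, Matrix.nonsing_inv_mul _ (gdet hg), Matrix.one_mulVec]

lemma mulVec_inv_mulVec (hg : IsUnit g) (x : Fin n → ℝ) : g *ᵥ (g⁻¹ *ᵥ x) = x := by
  rw [Matrix.mulVec_mulVec, Matrix.mul_nonsing_inv _ (gdet hg), Matrix.one_mulVec]

lemma mulVec_inj (hg : IsUnit g) : Function.Injective g.mulVec := fun x y hxy => by
  have := congrArg g⁻¹.mulVec hxy
  simpa [inv_mulVec_mulVec hg] using this

lemma image_inv_image (hg : IsUnit g) (Ω : Set (Fin n → ℝ)) :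
    g⁻¹.mulVec '' (g.mulVec '' Ω) = Ω := by
  rw [Set.image_image]
  simp only [inv_mulVec_mulVec hg, Set.image_id']

lemma image_image_inv (hg : IsUnit g) (Ω : Set (Fin n → ℝ)) :
    g.mulVec '' (g⁻¹.mulVec '' Ω) = Ω := by
  rw [Set.image_image]
  simp only [mulVec_inv_mulVec hg, Set.image_id']

lemma mulVec_image_smul (g : Matrix (Fin n) (Fin n) ℝ) (t : ℝ) (Ω : Set (Fin n → ℝ)) :
    g.mulVec '' (t • Ω) = t • (g.mulVec '' Ω) :=
  Set.image_smul_comm _ _ _ fun x => g.mulVec_smul t x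

lemma image_eq_preimage (hg : IsUnit g) (Ω : Set (Fin n → ℝ)) :
    g.mulVec '' Ω = g⁻¹.mulVec ⁻¹' Ω := by
  ext y
  constructor
  · rintro ⟨x, hx, rfl⟩
    simpa [Set.mem_preimage, inv_mulVec_mulVec hg] using hx
  · intro hy
    exact ⟨g⁻¹ *ᵥ y, hy, mulVec_inv_mulVec hg y⟩

lemma image_body (hg : IsUnit g) {Ω : Set (Fin n → ℝ)} (h : IsSymConvexBody Ω) :
    IsSymConvexBody (g.mulVec '' Ω) := by
  obtain ⟨hc, hconv, hint, hsym⟩ := h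
  have hcont : Continuous g.mulVec := continuous_const.matrix_mulVec continuous_id
  have hcont' : Continuous g⁻¹.mulVec := continuous_const.matrix_mulVec continuous_id
  refine ⟨hc.image hcont, ?_, ?_, ?_⟩
  · have := hconv.linear_image g.mulVecLin
    exact this
  · obtain ⟨x, hx⟩ := hint
    have hopen : IsOpen (g.mulVec '' interior Ω) := by
      rw [image_eq_preimage hg]
      exact isOpen_interior.preimage hcont'
    have hsub : g.mulVec '' interior Ω ⊆ g.mulVec '' Ω := Set.image_mono interior_subset
    exact ⟨g *ᵥ x, interior_maximal hsub hopen ⟨x, hx, rfl⟩⟩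
  · ext y
    constructor
    · rintro ⟨x, hx, rfl⟩
      rw [Set.mem_neg]
      refine ⟨-x, ?_, by rw [Matrix.mulVec_neg]⟩
      rw [hsym]; exact Set.neg_mem_neg.2 hx
    · intro hy
      rw [Set.mem_neg] at hy
      obtain ⟨x, hx, hxy⟩ := hy
      refine ⟨-x, ?_, ?_⟩
      · rw [hsym]; simpa [Set.mem_neg] using hx
      · rw [Matrix.mulVec_neg, hxy, neg_neg]

lemma bmFactor_image (hg : IsUnit g) (A B : Set (Fin n → ℝ)) :
    bmFactor (g.mulVec '' A) (g.mulVec '' B) = bmFactor A B := by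
  unfold bmFactor
  congr 1
  ext t
  simp only [Set.mem_setOf_eq, and_congr_right_iff]
  intro _
  rw [← mulVec_image_smul, Set.image_subset_image_iff (mulVec_inj hg)]

lemma bmDist_comm (A B : Set (Fin n → ℝ)) : bmDist A B = bmDist B A := by
  unfold bmDist; rw [mul_comm]

lemma bmDist_image (hg : IsUnit g) (A B : Set (Fin n → ℝ)) :
    bmDist (g.mulVec '' A) (g.mulVec '' B) = bmDist A B := by
  unfold bmDist; rw [bmFactor_image hg, bmFactor_image hg]

lemma bmDist_swap (hg : IsUnit g) (A B : Set (Fin n → ℝ)) :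
    bmDist (g.mulVec '' A) B = bmDist (g⁻¹.mulVec '' B) A := by
  conv_lhs => rw [← image_image_inv hg B]
  rw [bmDist_image hg, bmDist_comm]

end MulVec

lemma bmDist_nonneg {A B : Set (Fin n → ℝ)} (h1 : IsSymConvexBody A) (h2 : IsSymConvexBody B) :
    0 ≤ bmDist A B := by
  have ha := one_le_bmFactor h1 h2
  have hb := one_le_bmFactor h2 h1
  exact Real.log_nonneg (by nlinarith)

lemma bmDist_self {Ω : Set (Fin n → ℝ)} (h : IsSymConvexBody Ω) : bmDist Ω Ω = 0 := by
  unfold bmDist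
  rw [bmFactor_self h]; simp

lemma bmDist_triangle {A B C : Set (Fin n → ℝ)} (h1 : IsSymConvexBody A)
    (h2 : IsSymConvexBody B) (h3 : IsSymConvexBody C) :
    bmDist A C ≤ bmDist A B + bmDist B C := by
  have hab := one_le_bmFactor h1 h2
  have hba := one_le_bmFactor h2 h1
  have hbc := one_le_bmFactor h2 h3
  have hcb := one_le_bmFactor h3 h2
  have hf1 : bmFactor A C ≤ bmFactor B C * bmFactor A B := by
    apply bmFactor_le (by nlinarith)
    calc C ⊆ bmFactor B C • B := bmFactor_subset h2 h3
      _ ⊆ bmFactor B C • (bmFactor A B • A) := smul_set_mono (bmFactor_subset h1 h2)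
      _ = (bmFactor B C * bmFactor A B) • A := by rw [smul_smul]
  have hf2 : bmFactor C A ≤ bmFactor B A * bmFactor C B := by
    apply bmFactor_le (by nlinarith)
    calc A ⊆ bmFactor B A • B := bmFactor_subset h2 h1
      _ ⊆ bmFactor B A • (bmFactor C B • C) := smul_set_mono (bmFactor_subset h3 h2)
      _ = (bmFactor B A * bmFactor C B) • C := by rw [smul_smul]
  have hac := one_le_bmFactor h1 h3
  have hca := one_le_bmFactor h3 h1
  unfold bmDist
  rw [← Real.log_mul (by nlinarith) (by nlinarith)]
  apply Real.log_le_log (by nlinarith)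
  calc bmFactor A C * bmFactor C A
      ≤ (bmFactor B C * bmFactor A B) * (bmFactor B A * bmFactor C B) :=
        mul_le_mul hf1 hf2 (by nlinarith) (by nlinarith)
    _ = bmFactor A B * bmFactor B A * (bmFactor B C * bmFactor C B) := by ring

lemma shapeSet_nonempty (Ω₁ Ω₂ : Set (Fin n → ℝ)) :
    {r : ℝ | ∃ g : Matrix (Fin n) (Fin n) ℝ, IsUnit g ∧ r = bmDist (g.mulVec '' Ω₁) Ω₂}.Nonempty :=
  ⟨_, 1, isUnit_one, rfl⟩

lemma shapeSet_bddBelow {Ω₁ Ω₂ : Set (Fin n → ℝ)} (h1 : IsSymConvexBody Ω₁)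
    (h2 : IsSymConvexBody Ω₂) :
    BddBelow {r : ℝ | ∃ g : Matrix (Fin n) (Fin n) ℝ, IsUnit g ∧
      r = bmDist (g.mulVec '' Ω₁) Ω₂} := by
  refine ⟨0, ?_⟩
  rintro r ⟨g, hg, rfl⟩
  exact bmDist_nonneg (image_body hg h1) h2

lemma shapeDist_nonneg {Ω₁ Ω₂ : Set (Fin n → ℝ)} (h1 : IsSymConvexBody Ω₁)
    (h2 : IsSymConvexBody Ω₂) : 0 ≤ shapeDist Ω₁ Ω₂ := by
  apply le_csInf (shapeSet_nonempty _ _)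
  rintro r ⟨g, hg, rfl⟩
  exact bmDist_nonneg (image_body hg h1) h2

lemma shapeDist_le {Ω₁ Ω₂ : Set (Fin n → ℝ)} (h1 : IsSymConvexBody Ω₁)
    (h2 : IsSymConvexBody Ω₂) {g : Matrix (Fin n) (Fin n) ℝ} (hg : IsUnit g) :
    shapeDist Ω₁ Ω₂ ≤ bmDist (g.mulVec '' Ω₁) Ω₂ :=
  csInf_le (shapeSet_bddBelow h1 h2) ⟨g, hg, rfl⟩

lemma shapeDist_symm_le {Ω₁ Ω₂ : Set (Fin n → ℝ)} (h1 : IsSymConvexBody Ω₁)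
    (h2 : IsSymConvexBody Ω₂) : shapeDist Ω₁ Ω₂ ≤ shapeDist Ω₂ Ω₁ := by
  apply csInf_le_csInf (shapeSet_bddBelow h1 h2) (shapeSet_nonempty _ _)
  rintro r ⟨g, hg, rfl⟩
  exact ⟨g⁻¹, isUnit_inv hg, bmDist_swap hg Ω₂ Ω₁⟩

lemma shapeDist_triangle {Ω₁ Ω₂ Ω₃ : Set (Fin n → ℝ)} (h1 : IsSymConvexBody Ω₁)
    (h2 : IsSymConvexBody Ω₂) (h3 : IsSymConvexBody Ω₃) :
    shapeDist Ω₁ Ω₃ ≤ shapeDist Ω₁ Ω₂ + shapeDist Ω₂ Ω₃ := by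
  refine le_of_forall_pos_le_add fun ε hε => ?_
  have hε2 : 0 < ε/2 := by linarith
  have hlt1 : shapeDist Ω₁ Ω₂ < shapeDist Ω₁ Ω₂ + ε/2 := by linarith
  have hlt2 : shapeDist Ω₂ Ω₃ < shapeDist Ω₂ Ω₃ + ε/2 := by linarith
  obtain ⟨r₁, ⟨gA, hgA, rfl⟩, hr₁⟩ :=
    (csInf_lt_iff (shapeSet_bddBelow h1 h2) (shapeSet_nonempty _ _)).1 hlt1
  obtain ⟨r₂, ⟨gB, hgB, rfl⟩, hr₂⟩ :=
    (csInf_lt_iff (shapeSet_bddBelow h2 h3) (shapeSet_nonempty _ _)).1 hlt2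
  have him : (gB * gA).mulVec '' Ω₁ = gB.mulVec '' (gA.mulVec '' Ω₁) := by
    rw [Set.image_image]
    apply Set.image_congr'
    intro x
    rw [Matrix.mulVec_mulVec]
  have hstep : shapeDist Ω₁ Ω₃ ≤ bmDist ((gB * gA).mulVec '' Ω₁) Ω₃ :=
    shapeDist_le h1 h3 (hgB.mul hgA)
  have htri : bmDist (gB.mulVec '' (gA.mulVec '' Ω₁)) Ω₃ ≤
      bmDist (gB.mulVec '' (gA.mulVec '' Ω₁)) (gB.mulVec '' Ω₂) + bmDist (gB.mulVec '' Ω₂) Ω₃ :=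
    bmDist_triangle (image_body hgB (image_body hgA h1)) (image_body hgB h2) h3
  have heq : bmDist (gB.mulVec '' (gA.mulVec '' Ω₁)) (gB.mulVec '' Ω₂)
      = bmDist (gA.mulVec '' Ω₁) Ω₂ := bmDist_image hgB _ _
  rw [him] at hstep
  linarith

lemma tendsto_mulVec_entry {G : ℕ → Matrix (Fin n) (Fin n) ℝ} {g : Matrix (Fin n) (Fin n) ℝ}
    (hG : ∀ i j, Tendsto (fun k => G k i j) atTop (𝓝 (g i j)))
    {z : ℕ → Fin n → ℝ} {z₀ : Fin n → ℝ} (hz : ∀ j, Tendsto (fun k => z k j) atTop (𝓝 (z₀ j))) :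
    Tendsto (fun k => G k *ᵥ z k) atTop (𝓝 (g *ᵥ z₀)) := by
  rw [tendsto_pi_nhds]
  intro i
  simpa [Matrix.mulVec, dotProduct] using
    tendsto_finset_sum Finset.univ (fun j _ => (hG i j).mul (hz j))

lemma limit_subset₁ {Ω₁ Ω₂ : Set (Fin n → ℝ)} (h2 : IsClosed Ω₂)
    {G : ℕ → Matrix (Fin n) (Fin n) ℝ} {g : Matrix (Fin n) (Fin n) ℝ}
    (hG : ∀ i j, Tendsto (fun k => G k i j) atTop (𝓝 (g i j))) {b : ℕ → ℝ}
    (hb1 : ∀ k, 1 ≤ b k) (hb : Tendsto b atTop (𝓝 1))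
    (hsub : ∀ k, (G k).mulVec '' Ω₁ ⊆ b k • Ω₂) :
    g.mulVec '' Ω₁ ⊆ Ω₂ := by
  rintro _ ⟨x, hx, rfl⟩
  have hmem : ∀ k, (b k)⁻¹ • (G k *ᵥ x) ∈ Ω₂ := fun k => by
    obtain ⟨y, hy, hyx⟩ := hsub k ⟨x, hx, rfl⟩
    rw [← hyx, inv_smul_smul₀ (by linarith [hb1 k] : (b k) ≠ 0)]
    exact hy
  have hlim : Tendsto (fun k => (b k)⁻¹ • (G k *ᵥ x)) atTop (𝓝 ((1:ℝ)⁻¹ • (g *ᵥ x))) :=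
    (hb.inv₀ one_ne_zero).smul (tendsto_mulVec_entry hG fun j => tendsto_const_nhds)
  rw [inv_one, one_smul] at hlim
  exact h2.mem_of_tendsto hlim (Eventually.of_forall hmem)

lemma limit_subset₂ {Ω₁ Ω₂ : Set (Fin n → ℝ)} (h1 : IsCompact Ω₁)
    {G : ℕ → Matrix (Fin n) (Fin n) ℝ} {g : Matrix (Fin n) (Fin n) ℝ}
    (hG : ∀ i j, Tendsto (fun k => G k i j) atTop (𝓝 (g i j))) {a : ℕ → ℝ}
    (ha : Tendsto a atTop (𝓝 1))
    (hsub : ∀ k, Ω₂ ⊆ a k • ((G k).mulVec '' Ω₁)) :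
    Ω₂ ⊆ g.mulVec '' Ω₁ := by
  intro x hx
  have hex : ∀ k, ∃ z ∈ Ω₁, a k • (G k *ᵥ z) = x := by
    intro k
    obtain ⟨y, ⟨z, hz, rfl⟩, hyx⟩ := hsub k hx
    exact ⟨z, hz, hyx⟩
  choose z hz hzx using hex
  obtain ⟨z₀, hz₀, ψ, hψ, hzψ⟩ := h1.tendsto_subseq hz
  have hGψ : ∀ i j, Tendsto (fun k => G (ψ k) i j) atTop (𝓝 (g i j)) := fun i j =>
    (hG i j).comp hψ.tendsto_atTop
  have hzj : ∀ j, Tendsto (fun k => z (ψ k) j) atTop (𝓝 (z₀ j)) := fun j =>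
    ((continuous_apply j).tendsto z₀).comp hzψ
  have hlim : Tendsto (fun k => a (ψ k) • (G (ψ k) *ᵥ z (ψ k))) atTop (𝓝 ((1:ℝ) • (g *ᵥ z₀))) :=
    (ha.comp hψ.tendsto_atTop).smul (tendsto_mulVec_entry hGψ hzj)
  rw [one_smul] at hlim
  have hconst : Tendsto (fun _ : ℕ => x) atTop (𝓝 (g *ᵥ z₀)) := by
    have : (fun k => a (ψ k) • (G (ψ k) *ᵥ z (ψ k))) = fun _ : ℕ => x := by
      funext k; exact hzx (ψ k)
    rwa [this] at hlim
  exact ⟨z₀, hz₀, (tendsto_nhds_unique tendsto_const_nhds hconst).symm⟩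

lemma shapeDist_zero_orbit {Ω₁ Ω₂ : Set (Fin n → ℝ)} (h1 : IsSymConvexBody Ω₁)
    (h2 : IsSymConvexBody Ω₂) (h0 : shapeDist Ω₁ Ω₂ = 0) :
    ∃ g : Matrix (Fin n) (Fin n) ℝ, IsUnit g ∧ Ω₂ = g.mulVec '' Ω₁ := by
  -- choose approximating matrices
  have key : ∀ k : ℕ, ∃ g : Matrix (Fin n) (Fin n) ℝ, IsUnit g ∧
      bmDist (g.mulVec '' Ω₁) Ω₂ < 1/(k+1) := by
    intro k
    have hlt : sInf {r : ℝ | ∃ g : Matrix (Fin n) (Fin n) ℝ, IsUnit g ∧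
        r = bmDist (g.mulVec '' Ω₁) Ω₂} < 1/(k+1) := by
      rw [show sInf {r : ℝ | ∃ g : Matrix (Fin n) (Fin n) ℝ, IsUnit g ∧
        r = bmDist (g.mulVec '' Ω₁) Ω₂} = shapeDist Ω₁ Ω₂ from rfl, h0]
      positivity
    obtain ⟨r, ⟨g, hg, rfl⟩, hr⟩ :=
      (csInf_lt_iff (shapeSet_bddBelow h1 h2) (shapeSet_nonempty _ _)).1 hlt
    exact ⟨g, hg, hr⟩
  choose g hg hglt using key
  set A : ℕ → Set (Fin n → ℝ) := fun k => (g k).mulVec '' Ω₁ with hA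
  have hAbody : ∀ k, IsSymConvexBody (A k) := fun k => image_body (hg k) h1
  set a : ℕ → ℝ := fun k => bmFactor (A k) Ω₂ with ha
  set b : ℕ → ℝ := fun k => bmFactor Ω₂ (A k) with hb
  have ha1 : ∀ k, 1 ≤ a k := fun k => one_le_bmFactor (hAbody k) h2
  have hb1 : ∀ k, 1 ≤ b k := fun k => one_le_bmFactor h2 (hAbody k)
  have hprod : ∀ k, a k * b k < Real.exp (1/(k+1)) := fun k => by
    have hpos : 0 < a k * b k := by nlinarith [ha1 k, hb1 k]
    have := hglt k
    rw [bmDist] at this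
    calc a k * b k = Real.exp (Real.log (a k * b k)) := (Real.exp_log hpos).symm
      _ < Real.exp (1/(k+1)) := Real.exp_lt_exp.2 this
  have hexp : Tendsto (fun k : ℕ => Real.exp (1/(k+1))) atTop (𝓝 1) := by
    have h₀ : Tendsto (fun k : ℕ => 1/((k:ℝ)+1)) atTop (𝓝 0) :=
      tendsto_one_div_add_atTop_nhds_zero_nat
    simpa [Function.comp_def] using (Real.continuous_exp.tendsto 0).comp h₀
  have habt : Tendsto (fun k => a k * b k) atTop (𝓝 1) := by
    apply tendsto_of_tendsto_of_tendsto_of_le_of_le tendsto_const_nhds hexp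
    · exact fun k => (ha1 k).trans (le_mul_of_one_le_right (by linarith [ha1 k]) (hb1 k))
    · exact fun k => (hprod k).le
  have hat : Tendsto a atTop (𝓝 1) := by
    apply tendsto_of_tendsto_of_tendsto_of_le_of_le tendsto_const_nhds habt
    · exact ha1
    · exact fun k => le_mul_of_one_le_right (by linarith [ha1 k]) (hb1 k)
  have hbt : Tendsto b atTop (𝓝 1) := by
    apply tendsto_of_tendsto_of_tendsto_of_le_of_le tendsto_const_nhds habt
    · exact hb1
    · exact fun k => le_mul_of_one_le_left (by linarith [hb1 k]) (ha1 k)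
  have ha3 : ∀ k, a k ≤ 3 := fun k => by
    have h1e : Real.exp (1/((k:ℝ)+1)) ≤ Real.exp 1 := by
      apply Real.exp_le_exp.2
      rw [div_le_one (by positivity)]
      linarith [Nat.cast_nonneg (α := ℝ) k]
    have he3 : Real.exp 1 ≤ 3 := by
      have := Real.exp_one_lt_d9
      linarith
    nlinarith [hprod k, hb1 k, ha1 k]
  have hb3 : ∀ k, b k ≤ 3 := fun k => by
    have h1e : Real.exp (1/((k:ℝ)+1)) ≤ Real.exp 1 := by
      apply Real.exp_le_exp.2
      rw [div_le_one (by positivity)]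
      linarith [Nat.cast_nonneg (α := ℝ) k]
    have he3 : Real.exp 1 ≤ 3 := by
      have := Real.exp_one_lt_d9
      linarith
    nlinarith [hprod k, hb1 k, ha1 k]
  -- containments
  have hsub1 : ∀ k, A k ⊆ b k • Ω₂ := fun k => bmFactor_subset h2 (hAbody k)
  have hsub2 : ∀ k, Ω₂ ⊆ a k • A k := fun k => bmFactor_subset (hAbody k) h2
  -- radii
  obtain ⟨r1, R1, hr1, hR1, hball1, hsubR1⟩ := body_radii h1
  obtain ⟨r2, R2, hr2, hR2, hball2, hsubR2⟩ := body_radii h2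
  -- entry bounds for g k
  have hsingle : ∀ (r : ℝ), 0 < r → ∀ j : Fin n, r • (Pi.single j 1 : Fin n → ℝ) ∈ closedBall 0 r := by
    intro r hr j
    rw [mem_closedBall, dist_zero_right, pi_norm_le_iff_of_nonneg hr.le]
    intro i
    simp only [Pi.smul_apply, smul_eq_mul, Real.norm_eq_abs, Pi.single_apply]
    rcases eq_or_ne i j with h | h
    · rw [if_pos h, mul_one, abs_of_pos hr]
    · rw [if_neg h, mul_zero, abs_zero]; exact hr.le
  have hgb : ∀ k i j, |g k i j| ≤ 3*R2/r1 := by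
    intro k i j
    set v : Fin n → ℝ := r1 • (Pi.single j 1 : Fin n → ℝ) with hv
    have hmem : v ∈ Ω₁ := hball1 (hsingle r1 hr1 j)
    obtain ⟨y, hy, hyx⟩ := hsub1 k ⟨v, hmem, rfl⟩
    have hyR : ‖y‖ ≤ R2 := by simpa [dist_zero_right] using hsubR2 hy
    have hnorm : ‖g k *ᵥ v‖ ≤ 3 * R2 := by
      rw [← hyx, norm_smul, Real.norm_eq_abs, abs_of_pos (by linarith [hb1 k] : (0:ℝ) < b k)]
      nlinarith [hb3 k, hb1 k, norm_nonneg y]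
    have hco : |(g k *ᵥ v) i| ≤ 3*R2 := by
      have := norm_le_pi_norm (g k *ᵥ v) i
      rw [Real.norm_eq_abs] at this
      linarith
    have hent : (g k *ᵥ v) i = r1 * g k i j := by
      rw [hv, Matrix.mulVec_smul]
      simp [Matrix.mulVec_single]
    rw [hent, abs_mul, abs_of_pos hr1] at hco
    rw [le_div_iff₀ hr1]
    linarith
  have hinvb : ∀ k i j, |(g k)⁻¹ i j| ≤ 3*R1/r2 := by
    intro k i j
    set v : Fin n → ℝ := r2 • (Pi.single j 1 : Fin n → ℝ) with hv
    have hmem : v ∈ Ω₂ := hball2 (hsingle r2 hr2 j)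
    obtain ⟨y, ⟨zz, hzz, rfl⟩, hyx⟩ := hsub2 k hmem
    have hzR : ‖zz‖ ≤ R1 := by simpa [dist_zero_right] using hsubR1 hzz
    have hinv : (g k)⁻¹ *ᵥ v = a k • zz := by
      rw [← hyx, Matrix.mulVec_smul, inv_mulVec_mulVec (hg k)]
    have hnorm : ‖(g k)⁻¹ *ᵥ v‖ ≤ 3 * R1 := by
      rw [hinv, norm_smul, Real.norm_eq_abs, abs_of_pos (by linarith [ha1 k] : (0:ℝ) < a k)]
      nlinarith [ha3 k, ha1 k, norm_nonneg zz]
    have hco : |((g k)⁻¹ *ᵥ v) i| ≤ 3*R1 := by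
      have := norm_le_pi_norm ((g k)⁻¹ *ᵥ v) i
      rw [Real.norm_eq_abs] at this
      linarith
    have hent : ((g k)⁻¹ *ᵥ v) i = r2 * (g k)⁻¹ i j := by
      rw [hv, Matrix.mulVec_smul]
      simp [Matrix.mulVec_single]
    rw [hent, abs_mul, abs_of_pos hr2] at hco
    rw [le_div_iff₀ hr2]
    linarith
  -- extract a convergent subsequence of the pair (g k, (g k)⁻¹)
  set C1 : ℝ := 3*R2/r1
  set C2 : ℝ := 3*R1/r2
  set s : Set ((Fin n → Fin n → ℝ) × (Fin n → Fin n → ℝ)) :=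
    (Set.univ.pi fun _ => Set.univ.pi fun _ => Set.Icc (-C1) C1) ×ˢ
    (Set.univ.pi fun _ => Set.univ.pi fun _ => Set.Icc (-C2) C2) with hs
  have hscomp : IsCompact s :=
    (isCompact_univ_pi fun _ => isCompact_univ_pi fun _ => isCompact_Icc).prod
      (isCompact_univ_pi fun _ => isCompact_univ_pi fun _ => isCompact_Icc)
  set P : ℕ → ((Fin n → Fin n → ℝ) × (Fin n → Fin n → ℝ)) :=
    fun k => (fun i j => g k i j, fun i j => (g k)⁻¹ i j) with hP
  have hPmem : ∀ k, P k ∈ s := by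
    intro k
    constructor
    · intro i _
      intro j _
      exact abs_le.1 (hgb k i j)
    · intro i _
      intro j _
      exact abs_le.1 (hinvb k i j)
  obtain ⟨L, hLs, ψ, hψ, hPψ⟩ := hscomp.tendsto_subseq hPmem
  set G : Matrix (Fin n) (Fin n) ℝ := Matrix.of L.1 with hG
  set H : Matrix (Fin n) (Fin n) ℝ := Matrix.of L.2 with hH
  have hfst : Tendsto (fun k => (P (ψ k)).1) atTop (𝓝 L.1) :=
    (continuous_fst.tendsto L).comp hPψ
  have hsnd : Tendsto (fun k => (P (ψ k)).2) atTop (𝓝 L.2) :=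
    (continuous_snd.tendsto L).comp hPψ
  have hGt : ∀ i j, Tendsto (fun k => g (ψ k) i j) atTop (𝓝 (G i j)) := fun i j =>
    tendsto_pi_nhds.1 (tendsto_pi_nhds.1 hfst i) j
  have hHt : ∀ i j, Tendsto (fun k => (g (ψ k))⁻¹ i j) atTop (𝓝 (H i j)) := fun i j =>
    tendsto_pi_nhds.1 (tendsto_pi_nhds.1 hsnd i) j
  have hmul1 : G * H = 1 := by
    ext i j
    have hlim : Tendsto (fun k => ∑ l, g (ψ k) i l * (g (ψ k))⁻¹ l j) atTop
        (𝓝 (∑ l, G i l * H l j)) :=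
      tendsto_finset_sum _ fun l _ => (hGt i l).mul (hHt l j)
    have hval : ∀ k, ∑ l, g (ψ k) i l * (g (ψ k))⁻¹ l j = (1 : Matrix (Fin n) (Fin n) ℝ) i j := by
      intro k
      have hmm := Matrix.mul_nonsing_inv (g (ψ k)) (gdet (hg (ψ k)))
      calc ∑ l, g (ψ k) i l * (g (ψ k))⁻¹ l j = (g (ψ k) * (g (ψ k))⁻¹) i j := by
            rw [Matrix.mul_apply]
        _ = (1 : Matrix (Fin n) (Fin n) ℝ) i j := by rw [hmm]
    have hconst : Tendsto (fun _ : ℕ => (1 : Matrix (Fin n) (Fin n) ℝ) i j) atTop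
        (𝓝 (∑ l, G i l * H l j)) := by
      have : (fun k => ∑ l, g (ψ k) i l * (g (ψ k))⁻¹ l j)
          = fun _ : ℕ => (1 : Matrix (Fin n) (Fin n) ℝ) i j := funext hval
      rwa [this] at hlim
    have := tendsto_nhds_unique hconst tendsto_const_nhds
    rw [Matrix.mul_apply]
    exact this
  have hmul2 : H * G = 1 := by
    ext i j
    have hlim : Tendsto (fun k => ∑ l, (g (ψ k))⁻¹ i l * g (ψ k) l j) atTop
        (𝓝 (∑ l, H i l * G l j)) :=
      tendsto_finset_sum _ fun l _ => (hHt i l).mul (hGt l j)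
    have hval : ∀ k, ∑ l, (g (ψ k))⁻¹ i l * g (ψ k) l j = (1 : Matrix (Fin n) (Fin n) ℝ) i j := by
      intro k
      have hmm := Matrix.nonsing_inv_mul (g (ψ k)) (gdet (hg (ψ k)))
      calc ∑ l, (g (ψ k))⁻¹ i l * g (ψ k) l j = ((g (ψ k))⁻¹ * g (ψ k)) i j := by
            rw [Matrix.mul_apply]
        _ = (1 : Matrix (Fin n) (Fin n) ℝ) i j := by rw [hmm]
    have hconst : Tendsto (fun _ : ℕ => (1 : Matrix (Fin n) (Fin n) ℝ) i j) atTop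
        (𝓝 (∑ l, H i l * G l j)) := by
      have : (fun k => ∑ l, (g (ψ k))⁻¹ i l * g (ψ k) l j)
          = fun _ : ℕ => (1 : Matrix (Fin n) (Fin n) ℝ) i j := funext hval
      rwa [this] at hlim
    have := tendsto_nhds_unique hconst tendsto_const_nhds
    rw [Matrix.mul_apply]
    exact this
  have hGunit : IsUnit G := ⟨⟨G, H, hmul1, hmul2⟩, rfl⟩
  refine ⟨G, hGunit, ?_⟩
  have hincl1 : G.mulVec '' Ω₁ ⊆ Ω₂ := by
    apply limit_subset₁ h2.1.isClosed hGt (fun k => hb1 (ψ k))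
      (hbt.comp hψ.tendsto_atTop) (fun k => hsub1 (ψ k))
  have hincl2 : Ω₂ ⊆ G.mulVec '' Ω₁ := by
    apply limit_subset₂ h1.1 hGt (hat.comp hψ.tendsto_atTop) (fun k => hsub2 (ψ k))
  exact Subset.antisymm hincl2 hincl1

lemma symm_combo_mem {Ω : Set (Fin n → ℝ)} (hconv : Convex ℝ Ω) (h0 : (0 : Fin n → ℝ) ∈ Ω)
    (hsym : Ω = -Ω) (p : Fin n → (Fin n → ℝ)) (hp : ∀ j, p j ∈ Ω)
    (c : Fin n → ℝ) (hc : ∑ j, |c j| ≤ 1) : ∑ j, c j • p j ∈ Ω := by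
  classical
  set q : Fin n → (Fin n → ℝ) := fun j => if 0 ≤ c j then p j else -(p j) with hq
  have hqΩ : ∀ j, q j ∈ Ω := by
    intro j
    by_cases h : 0 ≤ c j
    · simp only [hq, if_pos h]; exact hp j
    · simp only [hq, if_neg h]
      rw [hsym]
      exact Set.neg_mem_neg.2 (hp j)
  have hcq : ∀ j, |c j| • q j = c j • p j := by
    intro j
    by_cases h : 0 ≤ c j
    · rw [hq]; simp only [if_pos h, abs_of_nonneg h]
    · rw [hq]; simp only [if_neg h, abs_of_neg (lt_of_not_ge h), smul_neg, neg_smul, neg_neg]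
  set w : Option (Fin n) → ℝ := fun o => o.elim (1 - ∑ j, |c j|) (fun j => |c j|) with hw
  set z : Option (Fin n) → (Fin n → ℝ) := fun o => o.elim 0 q with hz
  have hmem := hconv.sum_mem (t := (Finset.univ : Finset (Option (Fin n)))) (w := w) (z := z)
    (fun o _ => by
      rcases o with _ | j
      · simpa [hw] using hc
      · simpa [hw] using abs_nonneg (c j))
    (by simp [hw, Fintype.sum_option])
    (fun o _ => by
      rcases o with _ | j
      · simpa [hz] using h0
      · simpa [hz] using hqΩ j)
  have hsum : ∑ o : Option (Fin n), w o • z o = ∑ j, c j • p j := by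
    rw [Fintype.sum_option]
    simp only [hw, hz, Option.elim]
    rw [smul_zero, zero_add]
    exact Finset.sum_congr rfl fun j _ => hcq j
  rwa [hsum] at hmem

lemma exists_normalizer {Ω : Set (Fin n → ℝ)} (h : IsSymConvexBody Ω) :
    ∃ g : Matrix (Fin n) (Fin n) ℝ, IsUnit g ∧
      closedBall 0 (((n:ℝ)+1))⁻¹ ⊆ g.mulVec '' Ω ∧ g.mulVec '' Ω ⊆ closedBall 0 1 := by
  classical
  obtain ⟨r, R, hr, hR, hball, hsub⟩ := body_radii h
  have h0 : (0 : Fin n → ℝ) ∈ Ω := body_zero_mem h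
  set S : Set (Fin n → Fin n → ℝ) := Set.univ.pi (fun _ => Ω) with hS
  have hScomp : IsCompact S := isCompact_univ_pi fun _ => h.1
  set F : (Fin n → Fin n → ℝ) → ℝ := fun x => |(Matrix.of fun i j => x j i).det| with hF
  have hFcont : Continuous F := by
    apply Continuous.abs
    apply Continuous.matrix_det
    exact continuous_pi fun i => continuous_pi fun j =>
      (continuous_apply i).comp (continuous_apply j)
  have hx0mem : (fun j => r • (Pi.single j 1 : Fin n → ℝ)) ∈ S := by
    intro j _
    refine hball ?_
    rw [mem_closedBall, dist_zero_right, pi_norm_le_iff_of_nonneg hr.le]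
    intro i
    simp only [Pi.smul_apply, smul_eq_mul, Real.norm_eq_abs, Pi.single_apply]
    rcases eq_or_ne i j with hh | hh
    · rw [if_pos hh, mul_one, abs_of_pos hr]
    · rw [if_neg hh, mul_zero, abs_zero]; exact hr.le
  obtain ⟨x₀, hx₀S, hmax⟩ := hScomp.exists_isMaxOn ⟨_, hx0mem⟩ hFcont.continuousOn
  have hFdiag : F (fun j => r • (Pi.single j 1 : Fin n → ℝ)) = r^n := by
    have hdiag : (Matrix.of fun i j => (r • (Pi.single j 1 : Fin n → ℝ)) i)
        = Matrix.diagonal (fun _ => r) := by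
      ext i j
      simp only [Matrix.of_apply, Pi.smul_apply, smul_eq_mul, Pi.single_apply,
        Matrix.diagonal_apply]
      rcases eq_or_ne i j with hh | hh
      · rw [if_pos hh, if_pos hh, mul_one]
      · rw [if_neg hh, if_neg hh, mul_zero]
    rw [hF]
    simp only [hdiag, Matrix.det_diagonal, Finset.prod_const, Finset.card_univ,
      Fintype.card_fin]
    exact abs_of_pos (pow_pos hr n)
  have hFpos : 0 < F x₀ := by
    have hle : F (fun j => r • (Pi.single j 1 : Fin n → ℝ)) ≤ F x₀ := hmax hx0mem
    rw [hFdiag] at hle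
    exact lt_of_lt_of_le (pow_pos hr n) hle
  set M : Matrix (Fin n) (Fin n) ℝ := Matrix.of fun i j => x₀ j i with hM
  have hdet : M.det ≠ 0 := by
    intro hcon
    have heq : F x₀ = |M.det| := rfl
    rw [heq, hcon, abs_zero] at hFpos
    exact lt_irrefl 0 hFpos
  have hMunit : IsUnit M := (Matrix.isUnit_iff_isUnit_det M).2 (isUnit_iff_ne_zero.2 hdet)
  refine ⟨M⁻¹, isUnit_inv hMunit, ?_, ?_⟩
  · -- lower inclusion
    intro v hv
    have hvn : ‖v‖ ≤ ((n:ℝ)+1)⁻¹ := by simpa [dist_zero_right] using hv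
    refine ⟨M *ᵥ v, ?_, inv_mulVec_mulVec hMunit v⟩
    have hMv : M *ᵥ v = ∑ j, v j • x₀ j := by
      ext i
      rw [Finset.sum_apply]
      simp only [Matrix.mulVec, dotProduct, Matrix.of_apply, Pi.smul_apply,
        smul_eq_mul, hM]
      exact Finset.sum_congr rfl fun j _ => mul_comm _ _
    rw [hMv]
    apply symm_combo_mem h.2.1 h0 h.2.2.2 x₀ (fun j => hx₀S j (Set.mem_univ j)) v
    calc ∑ j, |v j| ≤ ∑ _j : Fin n, ((n:ℝ)+1)⁻¹ := by
          apply Finset.sum_le_sum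
          intro j _
          have := norm_le_pi_norm v j
          rw [Real.norm_eq_abs] at this
          linarith
      _ = n * ((n:ℝ)+1)⁻¹ := by
          rw [Finset.sum_const, Finset.card_univ, Fintype.card_fin, nsmul_eq_mul]
      _ ≤ ((n:ℝ)+1) * ((n:ℝ)+1)⁻¹ := by
          gcongr
          linarith
      _ = 1 := mul_inv_cancel₀ (by positivity)
  · -- upper inclusion
    rintro _ ⟨y, hy, rfl⟩
    rw [mem_closedBall, dist_zero_right, pi_norm_le_iff_of_nonneg zero_le_one]
    intro i
    have hdecomp : M⁻¹ *ᵥ y = (M.det)⁻¹ • (Matrix.cramer M y) := by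
      apply mulVec_inj hMunit
      rw [mulVec_inv_mulVec hMunit, Matrix.mulVec_smul, Matrix.mulVec_cramer, smul_smul,
        inv_mul_cancel₀ hdet, one_smul]
    have hcram : |Matrix.cramer M y i| ≤ |M.det| := by
      rw [Matrix.cramer_apply]
      have hupd : M.updateCol i y = Matrix.of fun a b => (Function.update x₀ i y) b a := by
        ext a b
        rw [Matrix.updateCol_apply, Matrix.of_apply, Function.update_apply]
        rcases eq_or_ne b i with hh | hh
        · rw [if_pos hh, if_pos hh]
        · rw [if_neg hh, if_neg hh, hM, Matrix.of_apply]
      have hmem' : (Function.update x₀ i y) ∈ S := by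
        intro j _
        rcases eq_or_ne j i with hh | hh
        · rw [Function.update_apply, if_pos hh]; exact hy
        · rw [Function.update_apply, if_neg hh]; exact hx₀S j (Set.mem_univ j)
      calc |(M.updateCol i y).det| = F (Function.update x₀ i y) := by rw [hupd, hF]
        _ ≤ F x₀ := hmax hmem'
        _ = |M.det| := rfl
    rw [hdecomp, Pi.smul_apply, smul_eq_mul, Real.norm_eq_abs, abs_mul, abs_inv]
    calc |M.det|⁻¹ * |Matrix.cramer M y i| ≤ |M.det|⁻¹ * |M.det| := by
          apply mul_le_mul_of_nonneg_left hcram (by positivity)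
      _ = 1 := inv_mul_cancel₀ (abs_ne_zero.2 hdet)

lemma subset_smul_of_near {K A : Set (Fin n → ℝ)} (hconv : Convex ℝ K)
    {ρ hh : ℝ} (hρ : 0 < ρ) (hball : closedBall 0 ρ ⊆ K) (hKc : IsCompact K) (hKne : K.Nonempty)
    (hhnn : 0 ≤ hh) (hA : ∀ x ∈ A, Metric.infDist x K ≤ hh) : A ⊆ (1 + hh/ρ) • K := by
  intro x hx
  obtain ⟨y, hy, hdy⟩ := hKc.exists_infDist_eq_dist hKne x
  have hdxy : ‖x - y‖ ≤ hh := by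
    rw [← dist_eq_norm, ← hdy]
    exact hA x hx
  rcases eq_or_lt_of_le hhnn with hh0 | hh0
  · have hxy : x = y := by
      have hle : ‖x - y‖ ≤ 0 := by rw [← hh0] at hdxy; exact hdxy
      have := le_antisymm hle (norm_nonneg _)
      rwa [norm_eq_zero, sub_eq_zero] at this
    refine ⟨y, hy, ?_⟩
    rw [← hh0, hxy]
    norm_num
  · set t : ℝ := 1 + hh/ρ with htdef
    have ht1 : 1 < t := by
      rw [htdef]
      have : 0 < hh/ρ := div_pos hh0 hρ
      linarith
    have ht0 : 0 < t := by linarith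
    have hhne : hh ≠ 0 := ne_of_gt hh0
    have hρne : ρ ≠ 0 := ne_of_gt hρ
    have htne : t ≠ 0 := ne_of_gt ht0
    set w : Fin n → ℝ := (1/t) • y + (hh/ρ/t) • ((ρ/hh) • (x - y)) with hwdef
    have hmem : (ρ/hh) • (x - y) ∈ closedBall (0 : Fin n → ℝ) ρ := by
      rw [mem_closedBall, dist_zero_right, norm_smul, Real.norm_eq_abs,
        abs_of_pos (div_pos hρ hh0)]
      calc ρ/hh * ‖x - y‖ ≤ ρ/hh * hh := by gcongr
        _ = ρ := by field_simp
    have hsum : 1/t + hh/ρ/t = 1 := by rw [htdef]; field_simp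
    have hwK : w ∈ K := hconv hy (hball hmem) (by positivity) (by positivity) hsum
    refine ⟨w, hwK, ?_⟩
    show t • w = x
    rw [hwdef, smul_add, smul_smul, smul_smul, smul_smul]
    have e1 : t * (1/t) = 1 := by field_simp
    have e2 : t * (hh/ρ/t) * (ρ/hh) = 1 := by field_simp
    rw [e1, e2, one_smul, one_smul]
    abel

lemma shape_compactness (Ω : ℕ → Set (Fin n → ℝ)) (hΩ : ∀ i, IsSymConvexBody (Ω i)) :
    ∃ φ : ℕ → ℕ, StrictMono φ ∧ ∃ Ωlim : Set (Fin n → ℝ), IsSymConvexBody Ωlim ∧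
      Tendsto (fun i => shapeDist (Ω (φ i)) Ωlim) atTop (𝓝 0) := by
  classical
  set ρ : ℝ := ((n:ℝ)+1)⁻¹ with hρdef
  have hρ : 0 < ρ := by positivity
  choose g hgU hglow hgup using fun i => exists_normalizer (hΩ i)
  set K : ℕ → Set (Fin n → ℝ) := fun i => (g i).mulVec '' Ω i with hKdef
  have hKbody : ∀ i, IsSymConvexBody (K i) := fun i => image_body (hgU i) (hΩ i)
  have hK0 : ∀ i, (0 : Fin n → ℝ) ∈ K i := fun i => hglow i (mem_closedBall_self hρ.le)
  have hKne : ∀ i, (K i).Nonempty := fun i => ⟨0, hK0 i⟩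
  set X : Set (Fin n → ℝ) := closedBall 0 1 with hXdef
  have hXclosed : IsClosed X := isClosed_closedBall
  haveI : CompactSpace X := isCompact_iff_compactSpace.1 (isCompact_closedBall _ _)
  have hKX : ∀ i, K i ⊆ X := hgup
  have hKcomp' : ∀ i, IsCompact (((↑) : X → (Fin n → ℝ)) ⁻¹' (K i)) := fun i =>
    hXclosed.isClosedEmbedding_subtypeVal.isCompact_preimage (hKbody i).1
  have h0X : (0 : Fin n → ℝ) ∈ X := mem_closedBall_self zero_le_one
  set K' : ℕ → TopologicalSpace.NonemptyCompacts X := fun i =>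
    ⟨⟨((↑) : X → (Fin n → ℝ)) ⁻¹' (K i), hKcomp' i⟩, ⟨⟨0, h0X⟩, hK0 i⟩⟩ with hK'def
  obtain ⟨L, -, φ, hφ, hLt⟩ := isCompact_univ.tendsto_subseq (x := K') fun i => Set.mem_univ _
  set Klim : Set (Fin n → ℝ) := ((↑) : X → (Fin n → ℝ)) '' (L : Set X) with hKlimdef
  have hvalK : ∀ i, ((↑) : X → (Fin n → ℝ)) '' ((K' i : Set X)) = K i := by
    intro i
    rw [hK'def]
    rw [show ((⟨⟨((↑) : X → (Fin n → ℝ)) ⁻¹' (K i), hKcomp' i⟩, ⟨⟨0, h0X⟩, hK0 i⟩⟩ :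
      TopologicalSpace.NonemptyCompacts X) : Set X) = ((↑) : X → (Fin n → ℝ)) ⁻¹' (K i) from rfl]
    rw [Subtype.image_preimage_coe]
    exact Set.inter_eq_right.2 (hKX i)
  have hHD : Tendsto (fun i => Metric.hausdorffDist (K (φ i)) Klim) atTop (𝓝 0) := by
    have h1 : Tendsto (fun i => dist (K' (φ i)) L) atTop (𝓝 0) :=
      tendsto_iff_dist_tendsto_zero.1 hLt
    have heq : ∀ i, Metric.hausdorffDist (K (φ i)) Klim = dist (K' (φ i)) L := by
      intro i
      rw [← hvalK (φ i), hKlimdef, Metric.hausdorffDist_image isometry_subtype_coe]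
      rfl
    simp only [heq]
    exact h1
  have hKlimsub : Klim ⊆ X := by
    rintro _ ⟨x, hx, rfl⟩
    exact x.2
  have hKlimcomp : IsCompact Klim := L.isCompact.image continuous_subtype_val
  have hKlimne : Klim.Nonempty := L.nonempty.image _
  have hbddX : IsBounded X := isBounded_closedBall
  have hne_top : ∀ (A B : Set (Fin n → ℝ)), A.Nonempty → B.Nonempty → A ⊆ X → B ⊆ X →
      EMetric.hausdorffEdist A B ≠ ⊤ := fun A B hA hB hAX hBX =>
    Metric.hausdorffEdist_ne_top_of_nonempty_of_bounded hA hB (hbddX.subset hAX)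
      (hbddX.subset hBX)
  -- membership in the limit from approximating sequences
  have hmemlim : ∀ (zz : ℕ → Fin n → ℝ) (w : Fin n → ℝ), (∀ i, zz i ∈ K (φ i)) →
      Tendsto zz atTop (𝓝 w) → w ∈ Klim := by
    intro zz w hzz hzt
    have hinf : ∀ i, Metric.infDist w Klim ≤
        dist w (zz i) + Metric.hausdorffDist (K (φ i)) Klim := by
      intro i
      calc Metric.infDist w Klim
          ≤ Metric.infDist (zz i) Klim + dist w (zz i) := Metric.infDist_le_infDist_add_dist
        _ ≤ Metric.hausdorffDist (K (φ i)) Klim + dist w (zz i) := by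
            gcongr
            exact Metric.infDist_le_hausdorffDist_of_mem (hzz i)
              (hne_top _ _ (hKne (φ i)) hKlimne (hKX (φ i)) hKlimsub)
        _ = dist w (zz i) + Metric.hausdorffDist (K (φ i)) Klim := by ring
    have h0' : Tendsto (fun i => dist w (zz i) + Metric.hausdorffDist (K (φ i)) Klim)
        atTop (𝓝 0) := by
      have hd : Tendsto (fun i => dist w (zz i)) atTop (𝓝 0) := by
        have := tendsto_iff_dist_tendsto_zero.1 hzt
        simpa [dist_comm] using this
      simpa using hd.add hHD
    have hle : Metric.infDist w Klim ≤ 0 := ge_of_tendsto h0' (Eventually.of_forall hinf)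
    have hz : Metric.infDist w Klim = 0 := le_antisymm hle Metric.infDist_nonneg
    rwa [← hKlimcomp.isClosed.mem_iff_infDist_zero hKlimne] at hz
  -- approximating sequences for points of the limit
  have happrox : ∀ w ∈ Klim, ∃ zz : ℕ → Fin n → ℝ,
      (∀ i, zz i ∈ K (φ i)) ∧ Tendsto zz atTop (𝓝 w) := by
    intro w hw
    have hsel : ∀ i, ∃ z ∈ K (φ i), Metric.infDist w (K (φ i)) = dist w z := fun i =>
      (hKbody (φ i)).1.exists_infDist_eq_dist (hKne (φ i)) w
    choose zz hzz hdzz using hsel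
    refine ⟨zz, hzz, ?_⟩
    rw [tendsto_iff_dist_tendsto_zero]
    refine squeeze_zero (fun i => dist_nonneg) (fun i => ?_) hHD
    rw [dist_comm, ← hdzz i]
    calc Metric.infDist w (K (φ i)) ≤ Metric.hausdorffDist Klim (K (φ i)) :=
          Metric.infDist_le_hausdorffDist_of_mem hw
            (hne_top _ _ hKlimne (hKne (φ i)) hKlimsub (hKX (φ i)))
      _ = Metric.hausdorffDist (K (φ i)) Klim := Metric.hausdorffDist_comm
  -- the limit is a body
  have hKlimconv : Convex ℝ Klim := by
    intro u hu v hv α β hα hβ hαβ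
    obtain ⟨zu, hzu, hzut⟩ := happrox u hu
    obtain ⟨zv, hzv, hzvt⟩ := happrox v hv
    exact hmemlim (fun i => α • zu i + β • zv i) _
      (fun i => (hKbody (φ i)).2.1 (hzu i) (hzv i) hα hβ hαβ)
      ((hzut.const_smul α).add (hzvt.const_smul β))
  have hballlim : closedBall 0 ρ ⊆ Klim := fun x hx =>
    hmemlim (fun _ => x) x (fun i => hglow (φ i) hx) tendsto_const_nhds
  have hKlimhalf : ∀ w ∈ Klim, -w ∈ Klim := by
    intro w hw
    obtain ⟨zz, hzz, hzt⟩ := happrox w hw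
    refine hmemlim (fun i => -(zz i)) _ (fun i => ?_) hzt.neg
    rw [(hKbody (φ i)).2.2.2]
    exact Set.neg_mem_neg.2 (hzz i)
  have hKlimsymm : Klim = -Klim := by
    ext u
    constructor
    · intro hu
      rw [Set.mem_neg]
      exact hKlimhalf u hu
    · intro hu
      rw [Set.mem_neg] at hu
      have := hKlimhalf (-u) hu
      rwa [neg_neg] at this
  have hKlimint : (interior Klim).Nonempty :=
    ⟨0, interior_maximal (ball_subset_closedBall.trans hballlim) isOpen_ball (mem_ball_self hρ)⟩
  have hKlimbody : IsSymConvexBody Klim := ⟨hKlimcomp, hKlimconv, hKlimint, hKlimsymm⟩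
  -- Banach–Mazur bound via Hausdorff distance
  have hfac : ∀ i, bmDist (K (φ i)) Klim ≤
      Real.log ((1 + Metric.hausdorffDist (K (φ i)) Klim / ρ) *
        (1 + Metric.hausdorffDist (K (φ i)) Klim / ρ)) := by
    intro i
    set hD : ℝ := Metric.hausdorffDist (K (φ i)) Klim with hDdef
    have hDnn : 0 ≤ hD := Metric.hausdorffDist_nonneg
    have honele : (1:ℝ) ≤ 1 + hD/ρ := le_add_of_nonneg_right (by positivity)
    have hf1 : bmFactor (K (φ i)) Klim ≤ 1 + hD/ρ := by
      apply bmFactor_le honele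
      apply subset_smul_of_near (hKbody (φ i)).2.1 hρ (hglow (φ i)) (hKbody (φ i)).1
        (hKne (φ i)) hDnn
      intro x hxlim
      calc Metric.infDist x (K (φ i)) ≤ Metric.hausdorffDist Klim (K (φ i)) :=
            Metric.infDist_le_hausdorffDist_of_mem hxlim
              (hne_top _ _ hKlimne (hKne (φ i)) hKlimsub (hKX (φ i)))
        _ = hD := Metric.hausdorffDist_comm
    have hf2 : bmFactor Klim (K (φ i)) ≤ 1 + hD/ρ := by
      apply bmFactor_le honele
      apply subset_smul_of_near hKlimconv hρ hballlim hKlimcomp hKlimne hDnn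
      intro x hxK
      exact Metric.infDist_le_hausdorffDist_of_mem hxK
        (hne_top _ _ (hKne (φ i)) hKlimne (hKX (φ i)) hKlimsub)
    rw [bmDist]
    have h1 := one_le_bmFactor (hKbody (φ i)) hKlimbody
    have h2 := one_le_bmFactor hKlimbody (hKbody (φ i))
    apply Real.log_le_log (by nlinarith)
    exact mul_le_mul hf1 hf2 (by linarith) (by linarith)
  have hupper : Tendsto (fun i => Real.log ((1 + Metric.hausdorffDist (K (φ i)) Klim / ρ) *
      (1 + Metric.hausdorffDist (K (φ i)) Klim / ρ))) atTop (𝓝 0) := by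
    have h1 : Tendsto (fun i => 1 + Metric.hausdorffDist (K (φ i)) Klim / ρ) atTop (𝓝 1) := by
      have h2 := hHD.div_const ρ
      rw [zero_div] at h2
      have h3 : Tendsto (fun i : ℕ => (1:ℝ) + Metric.hausdorffDist (K (φ i)) Klim / ρ)
          atTop (𝓝 (1 + 0)) := tendsto_const_nhds.add h2
      simpa using h3
    have h2 := h1.mul h1
    rw [mul_one] at h2
    have h3 := (Real.continuousAt_log one_ne_zero).tendsto.comp h2
    simpa [Function.comp_def] using h3
  refine ⟨φ, hφ, Klim, hKlimbody, ?_⟩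
  refine squeeze_zero (fun i => shapeDist_nonneg (hΩ (φ i)) hKlimbody) (fun i => ?_) hupper
  exact le_trans (shapeDist_le (hΩ (φ i)) hKlimbody (hgU (φ i))) (hfac i)

end ShapeAux

/-- **The space of shapes with the Banach–Mazur factormetric is a compact metric space.**
The factormetric `ρ(Sh Ω₁, Sh Ω₂) = inf_{g invertible} ρ(gΩ₁, Ω₂)` on shapes of centrally
symmetric convex bodies in `ℝⁿ` is symmetric, satisfies the triangle inequality, vanishes
exactly when the bodies lie in the same `GL(n, ℝ)`-orbit, and every sequence of shapes
has a convergent subsequence. -/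
theorem shape_space_compact_metric {n : ℕ} :
    (∀ Ω₁ Ω₂ : Set (Fin n → ℝ), IsSymConvexBody Ω₁ → IsSymConvexBody Ω₂ →
      shapeDist Ω₁ Ω₂ = shapeDist Ω₂ Ω₁) ∧
    (∀ Ω₁ Ω₂ Ω₃ : Set (Fin n → ℝ), IsSymConvexBody Ω₁ → IsSymConvexBody Ω₂ →
      IsSymConvexBody Ω₃ → shapeDist Ω₁ Ω₃ ≤ shapeDist Ω₁ Ω₂ + shapeDist Ω₂ Ω₃) ∧
    (∀ Ω₁ Ω₂ : Set (Fin n → ℝ), IsSymConvexBody Ω₁ → IsSymConvexBody Ω₂ →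
      (shapeDist Ω₁ Ω₂ = 0 ↔
        ∃ g : Matrix (Fin n) (Fin n) ℝ, IsUnit g ∧ Ω₂ = g.mulVec '' Ω₁)) ∧
    (∀ Ω : ℕ → Set (Fin n → ℝ), (∀ i, IsSymConvexBody (Ω i)) →
      ∃ φ : ℕ → ℕ, StrictMono φ ∧ ∃ Ωlim : Set (Fin n → ℝ), IsSymConvexBody Ωlim ∧
        Tendsto (fun i => shapeDist (Ω (φ i)) Ωlim) atTop (𝓝 0)) := by
  refine ⟨?_, ?_, ?_, ?_⟩
  · intro Ω₁ Ω₂ h1 h2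
    exact le_antisymm (ShapeAux.shapeDist_symm_le h1 h2) (ShapeAux.shapeDist_symm_le h2 h1)
  · intro Ω₁ Ω₂ Ω₃ h1 h2 h3
    exact ShapeAux.shapeDist_triangle h1 h2 h3
  · intro Ω₁ Ω₂ h1 h2
    constructor
    · exact ShapeAux.shapeDist_zero_orbit h1 h2
    · rintro ⟨g, hg, hΩ⟩
      refine le_antisymm ?_ (ShapeAux.shapeDist_nonneg h1 h2)
      have h0 : bmDist (g.mulVec '' Ω₁) Ω₂ = 0 := by
        rw [← hΩ]
        exact ShapeAux.bmDist_self h2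
      calc shapeDist Ω₁ Ω₂ ≤ bmDist (g.mulVec '' Ω₁) Ω₂ := ShapeAux.shapeDist_le h1 h2 hg
        _ = 0 := h0
  · intro Ω hΩ
    exact ShapeAux.shape_compactness Ω hΩ
end

section
/- Consider a single Brunovsky block of dimension n: the system ẋ = Ax + Bu on ℝⁿ where A is the nilpotent shift matrix with entries A_{i,i+1} = 1 and all other entries 0, B = (0, …, 0, 1)ᵀ, and u ∈ U ⊂ ℝ with U a fixed centrally symmetric convex body. Let δ(T) = diag(T^{−n}, T^{−n+1}, …, T^{−1}). Then for every T > 0 the reachable set satisfies δ(T)·D(T) = D(1); in particular the shape Sh D(T) does not depend on T. -/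
open MeasureTheory Matrix Set Filter Topology Pointwise

/-- The `n × n` nilpotent shift matrix of a Brunovsky block: ones on the superdiagonal. -/
def brunovskyA (n : ℕ) : Matrix (Fin n) (Fin n) ℝ :=
  Matrix.of fun i j => if (i : ℕ) + 1 = (j : ℕ) then 1 else 0

/-- The input column `B = (0, …, 0, 1)ᵀ` of a Brunovsky block. -/
def brunovskyB (n : ℕ) : Matrix (Fin n) (Fin 1) ℝ :=
  Matrix.of fun i _ => if (i : ℕ) = n - 1 then 1 else 0

attribute [local instance] Matrix.linftyOpNormedAddCommGroup Matrix.linftyOpNormedSpace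
  Matrix.linftyOpNormedRing Matrix.linftyOpNormedAlgebra

section aux
variable {n : ℕ} {T : ℝ}

lemma isUnit_delta (hT : T ≠ 0) :
    IsUnit (Matrix.diagonal fun i : Fin n => T ^ ((i : ℤ) - (n : ℤ))) := by
  rw [Matrix.isUnit_iff_isUnit_det, Matrix.det_diagonal, isUnit_iff_ne_zero]
  exact Finset.prod_ne_zero_iff.2 fun i _ => zpow_ne_zero _ hT

lemma delta_comm_A (hT : T ≠ 0) :
    (Matrix.diagonal fun i : Fin n => T ^ ((i : ℤ) - (n : ℤ))) * brunovskyA n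
      = T⁻¹ • (brunovskyA n * Matrix.diagonal fun i : Fin n => T ^ ((i : ℤ) - (n : ℤ))) := by
  ext i j
  rw [Matrix.diagonal_mul, Matrix.smul_apply, Matrix.mul_diagonal]
  show _ * (if (i:ℕ)+1 = (j:ℕ) then (1:ℝ) else 0) = T⁻¹ * ((if (i:ℕ)+1 = (j:ℕ) then (1:ℝ) else 0) * _)
  by_cases h : (i:ℕ)+1 = (j:ℕ)
  · simp only [h, if_pos, mul_one, one_mul, if_true]
    rw [mul_comm, ← _root_.zpow_neg_one, ← zpow_add₀ hT]
    congr 1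
    omega
  · simp [h]

lemma delta_exp_comm (hT : T ≠ 0) (t : ℝ) :
    (Matrix.diagonal fun i : Fin n => T ^ ((i : ℤ) - (n : ℤ))) *
        NormedSpace.exp (t • brunovskyA n)
      = NormedSpace.exp ((t / T) • brunovskyA n) *
          Matrix.diagonal fun i : Fin n => T ^ ((i : ℤ) - (n : ℤ)) := by
  set e := (isUnit_delta (n := n) (T := T) hT).unit with he
  have hev : (e : Matrix (Fin n) (Fin n) ℝ)
      = Matrix.diagonal fun i : Fin n => T ^ ((i : ℤ) - (n : ℤ)) := (isUnit_delta hT).unit_spec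
  have hconj : (e : Matrix (Fin n) (Fin n) ℝ) * (t • brunovskyA n) *
      (↑e⁻¹ : Matrix (Fin n) (Fin n) ℝ) = (t / T) • brunovskyA n := by
    rw [hev, mul_smul_comm, delta_comm_A hT, smul_smul, smul_mul_assoc, ← hev,
      Units.mul_inv_cancel_right, div_eq_mul_inv, mul_comm]
  have h2 := Matrix.exp_units_conj e (t • brunovskyA n)
  rw [hconj] at h2
  rw [← hev, h2, Units.inv_mul_cancel_right]

lemma delta_mul_B (hn : 0 < n) (hT : T ≠ 0) :
    (Matrix.diagonal fun i : Fin n => T ^ ((i : ℤ) - (n : ℤ))) * brunovskyB n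
      = T⁻¹ • brunovskyB n := by
  ext i j
  rw [Matrix.diagonal_mul, Matrix.smul_apply]
  show _ * (if (i:ℕ) = n - 1 then (1:ℝ) else 0) = T⁻¹ * (if (i:ℕ) = n - 1 then (1:ℝ) else 0)
  by_cases h : (i:ℕ) = n - 1
  · simp only [h, if_pos, mul_one]
    have : ((n - 1 : ℕ) : ℤ) - (n : ℤ) = -1 := by omega
    rw [this, _root_.zpow_neg_one]
  · simp [h]

lemma delta_mulVec_pointwise (hn : 0 < n) (hT : T ≠ 0) (s : ℝ) (w : Fin 1 → ℝ) :
    (Matrix.diagonal fun i : Fin n => T ^ ((i : ℤ) - (n : ℤ))) *ᵥ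
        (NormedSpace.exp ((T - s) • brunovskyA n) *ᵥ (brunovskyB n *ᵥ w))
      = T⁻¹ • (NormedSpace.exp ((1 - s / T) • brunovskyA n) *ᵥ (brunovskyB n *ᵥ w)) := by
  rw [Matrix.mulVec_mulVec, Matrix.mulVec_mulVec, Matrix.mulVec_mulVec]
  rw [delta_exp_comm hT, Matrix.mul_assoc, delta_mul_B hn hT, Matrix.mul_smul,
    Matrix.smul_mulVec]
  rw [show (T - s) / T = 1 - s / T by field_simp]

lemma intervalIntegrable_mulVec {k : ℕ} (M : ℝ → Matrix (Fin k) (Fin 1) ℝ)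
    (hM : Continuous M) (u : ℝ → Fin 1 → ℝ) (hu : Measurable u) (C : ℝ)
    (hC : ∀ s, ‖u s‖ ≤ C) (a b : ℝ) :
    IntervalIntegrable (fun s => M s *ᵥ u s) MeasureTheory.volume a b := by
  obtain ⟨K, hK⟩ := (isCompact_uIcc (a := a) (b := b)).exists_bound_of_continuousOn
    hM.continuousOn
  have hK0 : 0 ≤ K := le_trans (norm_nonneg _) (hK a left_mem_uIcc)
  have hmeas : Measurable fun s => M s *ᵥ u s := by
    rw [measurable_pi_iff]
    intro i
    simp only [Matrix.mulVec, dotProduct]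
    refine Finset.measurable_sum _ fun j _ => Measurable.mul ?_ ((measurable_pi_apply j).comp hu)
    exact (((continuous_apply j).comp ((continuous_apply i).comp hM))).measurable
  refine IntervalIntegrable.mono_fun' (g := fun _ => K * max C 0) intervalIntegrable_const
    hmeas.aestronglyMeasurable ?_
  refine (MeasureTheory.ae_restrict_iff' measurableSet_uIoc).2 (Filter.Eventually.of_forall ?_)
  intro s hs
  calc ‖M s *ᵥ u s‖ ≤ ‖M s‖ * ‖u s‖ := Matrix.linfty_opNorm_mulVec _ _
    _ ≤ K * max C 0 := by
        exact mul_le_mul (hK s (uIoc_subset_uIcc hs)) ((hC s).trans (le_max_left _ _))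
          (norm_nonneg _) hK0

lemma key_change (n : ℕ) (hn : 0 < n) (T : ℝ) (hT : 0 < T) (u : ℝ → Fin 1 → ℝ)
    (hu : Measurable u) (C : ℝ) (hC : ∀ s, ‖u s‖ ≤ C) :
    (Matrix.diagonal fun i : Fin n => T ^ ((i : ℤ) - (n : ℤ))).mulVec
        (∫ s in (0:ℝ)..T, NormedSpace.exp ((T - s) • brunovskyA n) *ᵥ (brunovskyB n *ᵥ u s))
      = ∫ σ in (0:ℝ)..1,
          NormedSpace.exp ((1 - σ) • brunovskyA n) *ᵥ (brunovskyB n *ᵥ u (T * σ)) := by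
  have hT0 : T ≠ 0 := ne_of_gt hT
  set δ := Matrix.diagonal fun i : Fin n => T ^ ((i : ℤ) - (n : ℤ)) with hδ
  set L : (Fin n → ℝ) →L[ℝ] (Fin n → ℝ) := LinearMap.toContinuousLinearMap δ.mulVecLin with hL
  have hLapp : ∀ x, L x = δ *ᵥ x := fun x => rfl
  have hMcont : Continuous fun s : ℝ =>
      NormedSpace.exp ((T - s) • brunovskyA n) * brunovskyB n := by
    exact Continuous.matrix_mul (NormedSpace.exp_continuous.comp
      (((continuous_const.sub continuous_id).smul continuous_const))) continuous_const
  have hint : IntervalIntegrable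
      (fun s => NormedSpace.exp ((T - s) • brunovskyA n) *ᵥ (brunovskyB n *ᵥ u s))
      MeasureTheory.volume 0 T := by
    have := intervalIntegrable_mulVec _ hMcont u hu C hC 0 T
    simpa [Matrix.mulVec_mulVec] using this
  have step1 := (L.intervalIntegral_comp_comm hint).symm
  rw [show δ.mulVec (∫ s in (0:ℝ)..T,
      NormedSpace.exp ((T - s) • brunovskyA n) *ᵥ (brunovskyB n *ᵥ u s)) = L _ from rfl, step1]
  have step2 : ∀ s : ℝ,
      L (NormedSpace.exp ((T - s) • brunovskyA n) *ᵥ (brunovskyB n *ᵥ u s))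
        = T⁻¹ • ((fun σ => NormedSpace.exp ((1 - σ) • brunovskyA n) *ᵥ
            (brunovskyB n *ᵥ u (T * σ))) (s / T)) := by
    intro s
    rw [hLapp, delta_mulVec_pointwise hn hT0]
    simp only
    rw [mul_div_cancel₀ _ hT0]
  rw [intervalIntegral.integral_congr (g := fun s => T⁻¹ • ((fun σ =>
      NormedSpace.exp ((1 - σ) • brunovskyA n) *ᵥ (brunovskyB n *ᵥ u (T * σ))) (s / T)))
      (fun s _ => step2 s)]
  have h3 := intervalIntegral.integral_comp_div (a := 0) (b := T) (c := T)
    (fun σ => NormedSpace.exp ((1 - σ) • brunovskyA n) *ᵥ (brunovskyB n *ᵥ u (T * σ))) hT0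
  rw [intervalIntegral.integral_smul, h3, zero_div, div_self hT0, inv_smul_smul₀ hT0]

lemma image_mulVec_comp {ι : Type*} [Fintype ι] (M N : Matrix ι ι ℝ) (Ω : Set (ι → ℝ)) :
    M.mulVec '' (N.mulVec '' Ω) = (M * N).mulVec '' Ω := by
  rw [← Set.image_comp]
  exact Set.image_congr fun x _ => Matrix.mulVec_mulVec x M N

lemma shapeOrbit_image {ι : Type*} [Fintype ι] [DecidableEq ι] (g : Matrix ι ι ℝ)
    (hg : IsUnit g) (Ω : Set (ι → ℝ)) : shapeOrbit (g.mulVec '' Ω) = shapeOrbit Ω := by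
  obtain ⟨e, rfl⟩ := hg
  ext S
  constructor
  · rintro ⟨h, hh, rfl⟩
    exact ⟨h * e, hh.mul e.isUnit, image_mulVec_comp _ _ _⟩
  · rintro ⟨h, hh, rfl⟩
    refine ⟨h * (↑e⁻¹ : Matrix ι ι ℝ), hh.mul e⁻¹.isUnit, ?_⟩
    rw [image_mulVec_comp, Units.inv_mul_cancel_right]

/-- **Self-similarity of the reachable sets of a single Brunovsky block.**
For the system `ẋ = Ax + Bu` with `A` the nilpotent shift, `B = (0,…,0,1)ᵀ`, and
`u ∈ U ⊂ ℝ` a centrally symmetric convex body, the matrix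
`δ(T) = diag(T^{-n}, …, T^{-1})` satisfies `δ(T)·D(T) = D(1)` for every `T > 0`;
in particular the shape `Sh D(T)` does not depend on `T`. -/
theorem brunovsky_block_reachable_selfsimilar (n : ℕ) (hn : 0 < n)
    (U : Set (Fin 1 → ℝ)) (hU : IsSymConvexBody U) (T : ℝ) (hT : 0 < T) :
    (Matrix.diagonal fun i : Fin n => T ^ ((i : ℤ) - (n : ℤ))).mulVec ''
        reachable (brunovskyA n) (brunovskyB n) U T =
      reachable (brunovskyA n) (brunovskyB n) U 1 ∧
    shapeOrbit (reachable (brunovskyA n) (brunovskyB n) U T) =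
      shapeOrbit (reachable (brunovskyA n) (brunovskyB n) U 1) := by
  have hT0 : T ≠ 0 := ne_of_gt hT
  obtain ⟨C, hC⟩ := hU.1.isBounded.exists_norm_le
  have hmain : (Matrix.diagonal fun i : Fin n => T ^ ((i : ℤ) - (n : ℤ))).mulVec ''
      reachable (brunovskyA n) (brunovskyB n) U T
        = reachable (brunovskyA n) (brunovskyB n) U 1 := by
    apply Set.Subset.antisymm
    · rintro _ ⟨x, ⟨u, hu, huU, rfl⟩, rfl⟩
      refine ⟨fun σ => u (T * σ), hu.comp (measurable_const_mul T), fun σ => huU _, ?_⟩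
      exact key_change n hn T hT u hu C (fun s => hC _ (huU s))
    · rintro y ⟨v, hv, hvU, rfl⟩
      refine ⟨∫ s in (0:ℝ)..T, NormedSpace.exp ((T - s) • brunovskyA n) *ᵥ
          (brunovskyB n *ᵥ v (s / T)), ⟨fun s => v (s / T),
          hv.comp (measurable_id.div_const T), fun s => hvU _, rfl⟩, ?_⟩
      rw [key_change n hn T hT (fun s => v (s / T))
        (hv.comp (measurable_id.div_const T)) C (fun s => hC _ (hvU _))]
      refine intervalIntegral.integral_congr fun σ _ => ?_
      rw [mul_comm, mul_div_assoc, div_self hT0, mul_one]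
  exact ⟨hmain, by rw [← hmain, shapeOrbit_image _ (isUnit_delta hT0)]⟩
end aux
end

section
/- Consider the controllable system ẋ = Ax + Bu on ℝⁿ in Brunovsky normal form: A = ⊕ᵢ Aᵢ and B = ⊕ᵢ Bᵢ, where each Aᵢ is the nᵢ×nᵢ nilpotent shift matrix (ones on the superdiagonal, zeros elsewhere) and each Bᵢ = (0, …, 0, 1)ᵀ ∈ ℝ^{nᵢ}, with controls u in a fixed centrally symmetric convex body U ⊂ ℝᵐ. Let δ(T) = ⊕ᵢ δᵢ(T) with δᵢ(T) = diag(T^{−nᵢ}, T^{−nᵢ+1}, …, T^{−1}). Then δ(T)·A·δ(T)⁻¹ = T⁻¹A and δ(T)·B = T⁻¹B, and consequently δ(T)·D(T) = D(1) for all T > 0, so the shapes Sh D(T) of the reachable sets do not depend on T. -/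
open MeasureTheory Matrix Set Filter Topology Pointwise

/-- The `A`-matrix of a system in Brunovsky normal form: a direct sum of nilpotent shift
blocks of sizes `ns i`, indexed by `(i : Fin r) × Fin (ns i)`. -/
def brunovskyBlockA {r : ℕ} (ns : Fin r → ℕ) :
    Matrix ((i : Fin r) × Fin (ns i)) ((i : Fin r) × Fin (ns i)) ℝ :=
  Matrix.of fun p q => if p.1 = q.1 ∧ (p.2 : ℕ) + 1 = (q.2 : ℕ) then 1 else 0

/-- The `B`-matrix of a system in Brunovsky normal form: a direct sum of the columns
`(0, …, 0, 1)ᵀ`, one for each block. -/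
def brunovskyBlockB {r : ℕ} (ns : Fin r → ℕ) :
    Matrix ((i : Fin r) × Fin (ns i)) (Fin r) ℝ :=
  Matrix.of fun p j => if p.1 = j ∧ (p.2 : ℕ) = ns p.1 - 1 then 1 else 0

/-- The normalizing matrix `δ(T) = ⊕ᵢ diag(T^{-nᵢ}, …, T^{-1})`. -/
noncomputable def brunovskyDelta {r : ℕ} (ns : Fin r → ℕ) (T : ℝ) :
    Matrix ((i : Fin r) × Fin (ns i)) ((i : Fin r) × Fin (ns i)) ℝ :=
  Matrix.diagonal fun p => T ^ ((p.2 : ℤ) - (ns p.1 : ℤ))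

/-! ### Auxiliary lemmas -/

private lemma brA_pow_ne_zero' {r : ℕ} {ns : Fin r → ℕ} (k : ℕ)
    {p q : (i : Fin r) × Fin (ns i)} (h : (brunovskyBlockA ns ^ k) p q ≠ 0) :
    (q.2 : ℕ) = (p.2 : ℕ) + k := by
  induction k generalizing q with
  | zero =>
    rw [pow_zero] at h
    rcases eq_or_ne p q with rfl | hne
    · simp
    · exact absurd (Matrix.one_apply_ne hne) h
  | succ k ih =>
    rw [pow_succ, Matrix.mul_apply] at h
    obtain ⟨j, -, hj⟩ := Finset.exists_ne_zero_of_sum_ne_zero h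
    have h1 : (brunovskyBlockA ns ^ k) p j ≠ 0 := fun h0 => hj (by rw [h0, zero_mul])
    have h2 : brunovskyBlockA ns j q ≠ 0 := fun h0 => hj (by rw [h0, mul_zero])
    have hj2 := ih h1
    have h3 : j.1 = q.1 ∧ (j.2 : ℕ) + 1 = (q.2 : ℕ) := by
      by_contra hc
      exact h2 (by simp only [brunovskyBlockA, Matrix.of_apply, if_neg hc])
    omega

private lemma brA_pow_eq_zero' {r : ℕ} {ns : Fin r → ℕ} {k : ℕ}
    (hk : Finset.univ.sup ns ≤ k) : brunovskyBlockA ns ^ k = 0 := by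
  ext p q
  rw [Matrix.zero_apply]
  by_contra h
  have h0 := brA_pow_ne_zero' k h
  have h1 : (q.2 : ℕ) < ns q.1 := q.2.isLt
  have h2 : ns q.1 ≤ Finset.univ.sup ns := Finset.le_sup (Finset.mem_univ q.1)
  omega

/-- The (polynomial) exponential sum of the nilpotent matrix `brunovskyBlockA`. -/
private noncomputable def brE {r : ℕ} (ns : Fin r → ℕ) (x : ℝ) :
    Matrix ((i : Fin r) × Fin (ns i)) ((i : Fin r) × Fin (ns i)) ℝ :=
  ∑ k ∈ Finset.range (Finset.univ.sup ns),
    (x ^ k * (k.factorial : ℝ)⁻¹) • brunovskyBlockA ns ^ k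

private lemma exp_smul_brA {r : ℕ} (ns : Fin r → ℕ) (x : ℝ) :
    NormedSpace.exp (x • brunovskyBlockA ns) = brE ns x := by
  simp only [NormedSpace.exp_eq_tsum ℝ]
  rw [tsum_eq_sum (s := Finset.range (Finset.univ.sup ns))
    (fun k hk => by
      rw [smul_pow, brA_pow_eq_zero' (by simpa using hk), smul_zero, smul_zero])]
  refine Finset.sum_congr rfl fun k _ => ?_
  rw [smul_pow, smul_smul, mul_comm]

private lemma delta_mul_brA {r : ℕ} {ns : Fin r → ℕ} {T : ℝ} (hT : T ≠ 0) :
    brunovskyDelta ns T * brunovskyBlockA ns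
      = T⁻¹ • (brunovskyBlockA ns * brunovskyDelta ns T) := by
  ext p q
  simp only [brunovskyDelta, brunovskyBlockA, Matrix.diagonal_mul, Matrix.mul_diagonal,
    Matrix.smul_apply, Matrix.of_apply, smul_eq_mul]
  split_ifs with h
  · rw [mul_one, one_mul]
    have he : (q.2 : ℤ) - (ns q.1 : ℤ) = ((p.2 : ℤ) - (ns p.1 : ℤ)) + 1 := by
      obtain ⟨h1, h2⟩ := h
      have h4 : ns p.1 = ns q.1 := by rw [h1]
      omega
    rw [he, zpow_add_one₀ hT]
    field_simp
  · rw [mul_zero, zero_mul, mul_zero]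

private lemma delta_mul_brA_pow {r : ℕ} {ns : Fin r → ℕ} {T : ℝ} (hT : T ≠ 0) (k : ℕ) :
    brunovskyDelta ns T * brunovskyBlockA ns ^ k
      = (T⁻¹) ^ k • (brunovskyBlockA ns ^ k * brunovskyDelta ns T) := by
  induction k with
  | zero => simp
  | succ k ih =>
    calc brunovskyDelta ns T * brunovskyBlockA ns ^ (k + 1)
        = (brunovskyDelta ns T * brunovskyBlockA ns ^ k) * brunovskyBlockA ns := by
          rw [pow_succ, mul_assoc]
      _ = (T⁻¹) ^ k • (brunovskyBlockA ns ^ k * (brunovskyDelta ns T * brunovskyBlockA ns)) := by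
          rw [ih, smul_mul_assoc, mul_assoc]
      _ = (T⁻¹) ^ (k + 1) • (brunovskyBlockA ns ^ (k + 1) * brunovskyDelta ns T) := by
          rw [delta_mul_brA hT, mul_smul_comm, smul_smul, pow_succ, pow_succ, mul_assoc]

private lemma delta_mul_brE {r : ℕ} {ns : Fin r → ℕ} {T : ℝ} (hT : T ≠ 0) (x : ℝ) :
    brunovskyDelta ns T * brE ns x = brE ns (x * T⁻¹) * brunovskyDelta ns T := by
  unfold brE
  rw [Finset.mul_sum, Finset.sum_mul]
  refine Finset.sum_congr rfl fun k _ => ?_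
  rw [mul_smul_comm, delta_mul_brA_pow hT k, smul_smul, smul_mul_assoc]
  congr 1
  ring

private lemma delta_mul_brB {r : ℕ} {ns : Fin r → ℕ} (hns : ∀ i, 0 < ns i) {T : ℝ}
    (hT : T ≠ 0) :
    brunovskyDelta ns T * brunovskyBlockB ns = T⁻¹ • brunovskyBlockB ns := by
  ext p j
  simp only [brunovskyDelta, brunovskyBlockB, Matrix.diagonal_mul, Matrix.smul_apply,
    Matrix.of_apply, smul_eq_mul]
  split_ifs with h
  · rw [mul_one, mul_one]
    have he : (p.2 : ℤ) - (ns p.1 : ℤ) = -1 := by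
      have := hns p.1
      have := h.2
      omega
    rw [he, _root_.zpow_neg_one]
  · rw [mul_zero, mul_zero]

private lemma delta_det_isUnit {r : ℕ} (ns : Fin r → ℕ) {T : ℝ} (hT : T ≠ 0) :
    IsUnit (brunovskyDelta ns T).det := by
  rw [brunovskyDelta, Matrix.det_diagonal, isUnit_iff_ne_zero]
  exact Finset.prod_ne_zero_iff.mpr fun p _ => zpow_ne_zero _ hT

private lemma sum_mulVec' {n m α : Type*} [Fintype m] [NonUnitalNonAssocSemiring α]
    {β : Type*} (s : Finset β) (M : β → Matrix n m α) (v : m → α) :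
    (∑ k ∈ s, M k) *ᵥ v = ∑ k ∈ s, M k *ᵥ v := by
  induction s using Finset.cons_induction with
  | empty => simp [Matrix.zero_mulVec]
  | cons a s ha ih => simp [Finset.sum_cons, Matrix.add_mulVec, ih]

private lemma key_integral {r : ℕ} {ns : Fin r → ℕ} (hns : ∀ i, 0 < ns i)
    {U : Set (Fin r → ℝ)} (hUc : IsCompact U) {T : ℝ} (hT : 0 < T)
    (u : ℝ → Fin r → ℝ) (hu : Measurable u) (huU : ∀ s, u s ∈ U) :
    (brunovskyDelta ns T) *ᵥ (∫ s in (0:ℝ)..T,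
        (NormedSpace.exp ((T - s) • brunovskyBlockA ns)) *ᵥ (brunovskyBlockB ns *ᵥ u s))
      = ∫ t in (0:ℝ)..1,
        (NormedSpace.exp ((1 - t) • brunovskyBlockA ns)) *ᵥ
          (brunovskyBlockB ns *ᵥ u (T * t)) := by
  have hT' : T ≠ 0 := ne_of_gt hT
  set F : ℝ × (Fin r → ℝ) → ((i : Fin r) × Fin (ns i)) → ℝ :=
    fun p => (NormedSpace.exp ((T - p.1) • brunovskyBlockA ns)) *ᵥ
      (brunovskyBlockB ns *ᵥ p.2) with hF
  have hFc : Continuous F := by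
    have he : F = fun p => ∑ k ∈ Finset.range (Finset.univ.sup ns),
        ((T - p.1) ^ k * (k.factorial : ℝ)⁻¹) •
          ((brunovskyBlockA ns ^ k * brunovskyBlockB ns) *ᵥ p.2) := by
      funext p
      simp only [hF]
      rw [exp_smul_brA, brE, sum_mulVec']
      refine Finset.sum_congr rfl fun k _ => ?_
      rw [Matrix.smul_mulVec, Matrix.mulVec_mulVec]
    rw [he]
    refine continuous_finset_sum _ fun k _ => Continuous.fun_smul ?_ ?_
    · exact (((continuous_const.sub continuous_fst).pow k).mul continuous_const)
    · exact ((brunovskyBlockA ns ^ k * brunovskyBlockB ns).mulVecLin.toContinuousLinearMap.continuous).comp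
        continuous_snd
  have hfmeas : Measurable fun s => F (s, u s) :=
    hFc.measurable.comp (measurable_id.prodMk hu)
  obtain ⟨C, hC⟩ : ∃ C, ∀ x ∈ (Set.uIcc (0:ℝ) T ×ˢ U), ‖F x‖ ≤ C :=
    (isCompact_uIcc.prod hUc).exists_bound_of_continuousOn hFc.continuousOn
  have hfint : IntervalIntegrable (fun s => F (s, u s)) volume 0 T := by
    rw [intervalIntegrable_iff]
    refine Integrable.mono' (g := fun _ => C)
      (integrableOn_const measure_Ioc_lt_top.ne)
      (hfmeas.aestronglyMeasurable.restrict) ?_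
    refine (ae_restrict_iff' measurableSet_uIoc).2 (ae_of_all _ fun s hs => ?_)
    exact hC (s, u s) ⟨Set.uIoc_subset_uIcc hs, huU s⟩
  have hL : brunovskyDelta ns T *ᵥ (∫ s in (0:ℝ)..T, F (s, u s))
      = ∫ s in (0:ℝ)..T, brunovskyDelta ns T *ᵥ F (s, u s) :=
    ((brunovskyDelta ns T).mulVecLin.toContinuousLinearMap.intervalIntegral_comp_comm
      hfint).symm
  have hpt : ∀ s : ℝ, brunovskyDelta ns T *ᵥ F (s, u s)
      = T⁻¹ • ((NormedSpace.exp (((T - s) * T⁻¹) • brunovskyBlockA ns)) *ᵥ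
          (brunovskyBlockB ns *ᵥ u s)) := by
    intro s
    simp only [hF]
    rw [Matrix.mulVec_mulVec, exp_smul_brA, delta_mul_brE hT', ← Matrix.mulVec_mulVec,
      Matrix.mulVec_mulVec (u s), delta_mul_brB hns hT', Matrix.smul_mulVec,
      Matrix.mulVec_smul, ← exp_smul_brA]
  calc brunovskyDelta ns T *ᵥ (∫ s in (0:ℝ)..T, F (s, u s))
      = ∫ s in (0:ℝ)..T, T⁻¹ •
          ((NormedSpace.exp (((T - s) * T⁻¹) • brunovskyBlockA ns)) *ᵥ
            (brunovskyBlockB ns *ᵥ u s)) := by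
        rw [hL]; exact intervalIntegral.integral_congr fun s _ => hpt s
    _ = T⁻¹ • ∫ s in (0:ℝ)..T,
          (NormedSpace.exp (((T - s) * T⁻¹) • brunovskyBlockA ns)) *ᵥ
            (brunovskyBlockB ns *ᵥ u s) := by
        rw [intervalIntegral.integral_smul]
    _ = T⁻¹ • (T • ∫ t in (0:ℝ)..1,
          (NormedSpace.exp (((T - T * t) * T⁻¹) • brunovskyBlockA ns)) *ᵥ
            (brunovskyBlockB ns *ᵥ u (T * t))) := by
        rw [intervalIntegral.smul_integral_comp_mul_left
          (fun s => (NormedSpace.exp (((T - s) * T⁻¹) • brunovskyBlockA ns)) *ᵥ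
            (brunovskyBlockB ns *ᵥ u s)) T,
          mul_zero, mul_one]
    _ = ∫ t in (0:ℝ)..1,
          (NormedSpace.exp ((1 - t) • brunovskyBlockA ns)) *ᵥ
            (brunovskyBlockB ns *ᵥ u (T * t)) := by
        rw [smul_smul, inv_mul_cancel₀ hT', one_smul]
        refine intervalIntegral.integral_congr fun t _ => ?_
        have hx : (T - T * t) * T⁻¹ = 1 - t := by field_simp
        rw [hx]

/-- **Self-similarity of the reachable sets of a system in Brunovsky normal form.**
For `A = ⊕ᵢ Aᵢ`, `B = ⊕ᵢ Bᵢ` in Brunovsky form and `δ(T) = ⊕ᵢ δᵢ(T)` with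
`δᵢ(T) = diag(T^{-nᵢ}, …, T^{-1})` one has `δ(T)·A·δ(T)⁻¹ = T⁻¹A`, `δ(T)·B = T⁻¹B`,
and consequently `δ(T)·D(T) = D(1)` for all `T > 0`, so the shapes `Sh D(T)` of the
reachable sets do not depend on `T`. -/
theorem brunovsky_normal_form_selfsimilar {r : ℕ} (ns : Fin r → ℕ) (hns : ∀ i, 0 < ns i)
    (U : Set (Fin r → ℝ)) (hU : IsSymConvexBody U) (T : ℝ) (hT : 0 < T) :
    brunovskyDelta ns T * brunovskyBlockA ns * (brunovskyDelta ns T)⁻¹ =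
        T⁻¹ • brunovskyBlockA ns ∧
    brunovskyDelta ns T * brunovskyBlockB ns = T⁻¹ • brunovskyBlockB ns ∧
    (brunovskyDelta ns T).mulVec '' reachable (brunovskyBlockA ns) (brunovskyBlockB ns) U T =
        reachable (brunovskyBlockA ns) (brunovskyBlockB ns) U 1 ∧
    shapeOrbit (reachable (brunovskyBlockA ns) (brunovskyBlockB ns) U T) =
        shapeOrbit (reachable (brunovskyBlockA ns) (brunovskyBlockB ns) U 1) := by
  have hT' : T ≠ 0 := ne_of_gt hT
  have hdet : IsUnit (brunovskyDelta ns T).det := delta_det_isUnit ns hT'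
  have hdu : IsUnit (brunovskyDelta ns T) := (Matrix.isUnit_iff_isUnit_det _).2 hdet
  -- conjunct 1
  have h1 : brunovskyDelta ns T * brunovskyBlockA ns * (brunovskyDelta ns T)⁻¹ =
      T⁻¹ • brunovskyBlockA ns := by
    rw [delta_mul_brA hT', Matrix.smul_mul, mul_assoc, Matrix.mul_nonsing_inv _ hdet, mul_one]
  -- conjunct 2
  have h2 : brunovskyDelta ns T * brunovskyBlockB ns = T⁻¹ • brunovskyBlockB ns :=
    delta_mul_brB hns hT'
  -- conjunct 3
  have h3 : (brunovskyDelta ns T).mulVec ''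
        reachable (brunovskyBlockA ns) (brunovskyBlockB ns) U T =
      reachable (brunovskyBlockA ns) (brunovskyBlockB ns) U 1 := by
    ext x
    constructor
    · rintro ⟨y, ⟨u, hu, huU, rfl⟩, rfl⟩
      refine ⟨fun t => u (T * t), hu.comp (measurable_const_mul T), fun t => huU _, ?_⟩
      exact key_integral hns hU.1 hT u hu huU
    · rintro ⟨v, hv, hvU, rfl⟩
      have hu : Measurable fun s => v (T⁻¹ * s) := hv.comp (measurable_const_mul T⁻¹)
      have huU : ∀ s, v (T⁻¹ * s) ∈ U := fun s => hvU _
      refine ⟨∫ s in (0:ℝ)..T, (NormedSpace.exp ((T - s) • brunovskyBlockA ns)) *ᵥ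
          (brunovskyBlockB ns *ᵥ v (T⁻¹ * s)),
        ⟨fun s => v (T⁻¹ * s), hu, huU, rfl⟩, ?_⟩
      rw [key_integral hns hU.1 hT _ hu huU]
      refine intervalIntegral.integral_congr fun t _ => ?_
      rw [inv_mul_cancel_left₀ hT']
  refine ⟨h1, h2, h3, ?_⟩
  -- conjunct 4
  have hinv : (brunovskyDelta ns T)⁻¹.mulVec ''
        reachable (brunovskyBlockA ns) (brunovskyBlockB ns) U 1 =
      reachable (brunovskyBlockA ns) (brunovskyBlockB ns) U T := by
    rw [← h3, Set.image_image]
    simp only [Matrix.mulVec_mulVec, Matrix.nonsing_inv_mul _ hdet, Matrix.one_mulVec]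
    exact Set.image_id _
  have hdu' : IsUnit (brunovskyDelta ns T)⁻¹ :=
    ⟨⟨(brunovskyDelta ns T)⁻¹, brunovskyDelta ns T, Matrix.nonsing_inv_mul _ hdet,
      Matrix.mul_nonsing_inv _ hdet⟩, rfl⟩
  ext S
  constructor
  · rintro ⟨g, hg, rfl⟩
    refine ⟨g * (brunovskyDelta ns T)⁻¹, hg.mul hdu', ?_⟩
    rw [← hinv, Set.image_image]
    simp only [Matrix.mulVec_mulVec]
  · rintro ⟨g, hg, rfl⟩
    refine ⟨g * brunovskyDelta ns T, hg.mul hdu, ?_⟩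
    rw [← h3, Set.image_image]
    simp only [Matrix.mulVec_mulVec]
end

section
/- Let ẋ = Ax + Bu and ẋ̃ = Ax̃ + B(u + Cx̃) be a linear system and its modification by the feedback Cx̃, where C is an m×n matrix, with controls u taking values in a centrally symmetric convex body U ⊂ ℝᵐ. Then there exist constants c > 0, T₀ > 0 such that for all 0 < T ≤ T₀ the reachable sets satisfy D̃(T) ⊆ (1 + cT)·D(T), where D(T) and D̃(T) are the reachable sets from the origin of the original and the feedback system respectively. (The bound arises because along any trajectory x̃ of the feedback system with x̃(0) = 0 one has Cx̃(t) = O(t) uniformly, so u(t) + Cx̃(t) ∈ (1 + cT)U for t ≤ T.) -/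
open MeasureTheory Matrix Set Filter Topology Pointwise

section FeedbackAux
open NormedSpace intervalIntegral


lemma exists_bound_of_compact {X E : Type*} [TopologicalSpace X] [NormedAddCommGroup E]
    {K : Set X} (hK : IsCompact K) {f : X → E} (hf : Continuous f) :
    ∃ R, 0 ≤ R ∧ ∀ x ∈ K, ‖f x‖ ≤ R := by
  obtain ⟨R, hR⟩ := (hK.image hf.norm).bddAbove
  exact ⟨max R 0, le_max_right _ _, fun x hx =>
    le_trans (hR (Set.mem_image_of_mem _ hx)) (le_max_left _ _)⟩

lemma II_of_bounded {E : Type*} [NormedAddCommGroup E] {f : ℝ → E}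
    (hm : AEStronglyMeasurable f volume)
    {a b R : ℝ} (h : ∀ x ∈ Set.uIoc a b, ‖f x‖ ≤ R) : IntervalIntegrable f volume a b := by
  rw [intervalIntegrable_iff]
  have hc : IntegrableOn (fun _ : ℝ => R) (Set.uIoc a b) volume :=
    integrableOn_const (by rw [Set.uIoc]; exact measure_Ioc_lt_top.ne)
  refine Integrable.mono' hc hm.restrict ?_
  filter_upwards [ae_restrict_mem measurableSet_uIoc] with x hx using h x hx

lemma continuous_mulVec_pair {a b : Type*} [Fintype a] [Fintype b] :
    Continuous fun p : Matrix a b ℝ × (b → ℝ) => p.1 *ᵥ p.2 := by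
  refine continuous_pi fun i => ?_
  simp only [Matrix.mulVec, dotProduct]
  exact continuous_finset_sum _ fun j _ =>
    (((continuous_apply_apply i j).comp continuous_fst).mul
      ((continuous_apply j).comp continuous_snd))

lemma continuous_mulVec_comp {a b : Type*} [Fintype a] [Fintype b]
    {X : Type*} [TopologicalSpace X] {k : X → Matrix a b ℝ} {v : X → b → ℝ}
    (hk : Continuous k) (hv : Continuous v) : Continuous fun s => k s *ᵥ v s :=
  continuous_mulVec_pair.comp (hk.prodMk hv)

lemma measurable_mulVec {α : Type*} [MeasurableSpace α] {a b : Type*} [Fintype b]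
    {k : α → Matrix a b ℝ} {v : α → b → ℝ}
    (hk : ∀ i j, Measurable fun s => k s i j) (hv : Measurable v) :
    Measurable fun s => k s *ᵥ v s := by
  rw [measurable_pi_iff]
  intro i
  simp only [Matrix.mulVec, dotProduct]
  exact Finset.measurable_sum _ fun j _ => (hk i j).mul ((measurable_pi_apply j).comp hv)

lemma triangle_swap {E : Type*} [NormedAddCommGroup E] [NormedSpace ℝ E] [CompleteSpace E]
    [MeasurableSpace E] [BorelSpace E] [SecondCountableTopology E]
    {g : ℝ → ℝ → E} {T R : ℝ} (hT : 0 ≤ T)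
    (hgm : Measurable (Function.uncurry g))
    (hb : ∀ s ∈ Icc (0:ℝ) T, ∀ σ ∈ Icc (0:ℝ) T, ‖g s σ‖ ≤ R) :
    ∫ s in (0:ℝ)..T, (∫ σ in s..T, g s σ) = ∫ σ in (0:ℝ)..T, (∫ s in (0:ℝ)..σ, g s σ) := by
  set μ := volume.restrict (Ioc (0:ℝ) T) with hμ
  haveI : IsFiniteMeasure μ := ⟨by
    rw [hμ, Measure.restrict_apply_univ]; exact measure_Ioc_lt_top⟩
  set h : ℝ → ℝ → E := fun s σ => if s ≤ σ then g s σ else 0 with hh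
  have hhm : Measurable (Function.uncurry h) := by
    exact Measurable.ite (measurableSet_le measurable_fst measurable_snd) hgm measurable_const
  have hmem : ∀ᵐ p ∂(μ.prod μ), p ∈ Ioc (0:ℝ) T ×ˢ Ioc (0:ℝ) T := by
    rw [hμ, Measure.prod_restrict]
    exact ae_restrict_mem (measurableSet_Ioc.prod measurableSet_Ioc)
  have hint : Integrable (Function.uncurry h) (μ.prod μ) := by
    refine Integrable.mono' (integrable_const (max R 0)) hhm.aestronglyMeasurable ?_
    filter_upwards [hmem] with p hp
    by_cases hle : p.1 ≤ p.2
    · have he : Function.uncurry h p = g p.1 p.2 := by simp [hh, Function.uncurry, hle]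
      rw [he]
      exact le_max_of_le_left (hb p.1 (Ioc_subset_Icc_self hp.1) p.2 (Ioc_subset_Icc_self hp.2))
    · have he : Function.uncurry h p = 0 := by simp [hh, Function.uncurry, hle]
      rw [he, norm_zero]
      exact le_max_of_le_right le_rfl
  have swap := integral_integral_swap hint
  have lhs : ∫ s in (0:ℝ)..T, (∫ σ in s..T, g s σ) = ∫ s, (∫ σ, h s σ ∂μ) ∂μ := by
    rw [integral_of_le hT]
    refine setIntegral_congr_fun measurableSet_Ioc fun s hs => ?_
    have h1 : (fun σ => h s σ) = (Ici s).indicator (g s) := by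
      funext σ; simp [hh, Set.indicator_apply, Set.mem_Ici]
    rw [integral_of_le hs.2, h1, MeasureTheory.integral_indicator measurableSet_Ici,
      Measure.restrict_restrict measurableSet_Ici]
    have h2 : Ici s ∩ Ioc 0 T = Icc s T := by
      ext σ
      simp only [mem_inter_iff, mem_Ici, mem_Ioc, mem_Icc]
      exact ⟨fun ⟨a, _, b⟩ => ⟨a, b⟩, fun ⟨a, b⟩ => ⟨a, lt_of_lt_of_le hs.1 a, b⟩⟩
    rw [h2, integral_Icc_eq_integral_Ioc]
  have rhs : ∫ σ in (0:ℝ)..T, (∫ s in (0:ℝ)..σ, g s σ) = ∫ σ, (∫ s, h s σ ∂μ) ∂μ := by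
    rw [integral_of_le hT]
    refine setIntegral_congr_fun measurableSet_Ioc fun σ hσ => ?_
    have h1 : (fun s => h s σ) = (Iic σ).indicator (fun s => g s σ) := by
      funext s; simp [hh, Set.indicator_apply, Set.mem_Iic]
    rw [integral_of_le hσ.1.le, h1, MeasureTheory.integral_indicator measurableSet_Iic,
      Measure.restrict_restrict measurableSet_Iic]
    have h2 : Iic σ ∩ Ioc 0 T = Ioc 0 σ := by
      ext s
      simp only [mem_inter_iff, mem_Iic, mem_Ioc]
      exact ⟨fun ⟨a, b, _⟩ => ⟨b, a⟩, fun ⟨a, b⟩ => ⟨b, a, le_trans b hσ.2⟩⟩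
    rw [h2]
  rw [lhs, rhs]
  exact swap

lemma exp_kernel_integral_vec {n : ℕ} (A M : Matrix (Fin n) (Fin n) ℝ) (b : Fin n → ℝ)
    (s T : ℝ) :
    ∫ σ in s..T, (exp ((T - σ) • A) * (M - A) * exp ((σ - s) • M)) *ᵥ b =
      (exp ((T - s) • M)) *ᵥ b - (exp ((T - s) • A)) *ᵥ b := by
  letI : SeminormedRing (Matrix (Fin n) (Fin n) ℝ) := Matrix.linftyOpSemiNormedRing
  letI : NormedRing (Matrix (Fin n) (Fin n) ℝ) := Matrix.linftyOpNormedRing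
  letI : NormedAlgebra ℝ (Matrix (Fin n) (Fin n) ℝ) := Matrix.linftyOpNormedAlgebra
  letI : NormedAlgebra ℚ (Matrix (Fin n) (Fin n) ℝ) := Matrix.linftyOpNormedAlgebra
  have hd : ∀ σ : ℝ, HasDerivAt (fun σ => exp ((T - σ) • A) * exp ((σ - s) • M))
      (exp ((T - σ) • A) * (M - A) * exp ((σ - s) • M)) σ := by
    intro σ
    have h1 : HasDerivAt (fun σ : ℝ => exp ((T - σ) • A)) (-(exp ((T - σ) • A) * A)) σ := by
      have hg : HasDerivAt (fun σ : ℝ => T - σ) (-1) σ := (hasDerivAt_id σ).const_sub T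
      have := (hasDerivAt_exp_smul_const (𝕂 := ℝ) A (T - σ)).scomp σ hg
      simp only [Function.comp_def, neg_smul, one_smul] at this
      exact this
    have h2 : HasDerivAt (fun σ : ℝ => exp ((σ - s) • M)) (M * exp ((σ - s) • M)) σ := by
      have hg : HasDerivAt (fun σ : ℝ => σ - s) 1 σ := (hasDerivAt_id σ).sub_const s
      have := (hasDerivAt_exp_smul_const' (𝕂 := ℝ) M (σ - s)).scomp σ hg
      simp [Function.comp_def] at this
      exact this
    have := h1.mul h2
    exact this.congr_deriv (by noncomm_ring)
  have hcont : Continuous fun σ : ℝ => exp ((T - σ) • A) * (M - A) * exp ((σ - s) • M) := by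
    have e1 : Continuous fun σ : ℝ => exp ((T - σ) • A) :=
      exp_continuous.comp ((continuous_const.sub continuous_id).smul continuous_const)
    have e2 : Continuous fun σ : ℝ => exp ((σ - s) • M) :=
      exp_continuous.comp ((continuous_id.sub continuous_const).smul continuous_const)
    exact (e1.mul continuous_const).mul e2
  have key : ∫ σ in s..T, (exp ((T - σ) • A) * (M - A) * exp ((σ - s) • M)) =
      exp ((T - s) • M) - exp ((T - s) • A) := by
    rw [intervalIntegral.integral_eq_sub_of_hasDerivAt (fun σ _ => hd σ)
      (hcont.intervalIntegrable s T)]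
    simp
  let L0 : Matrix (Fin n) (Fin n) ℝ →ₗ[ℝ] (Fin n → ℝ) :=
    { toFun := (· *ᵥ b)
      map_add' := fun X Y => Matrix.add_mulVec X Y b
      map_smul' := fun c X => Matrix.smul_mulVec c X b }
  let L : Matrix (Fin n) (Fin n) ℝ →L[ℝ] (Fin n → ℝ) := LinearMap.toContinuousLinearMap L0
  have hL : ∀ X : Matrix (Fin n) (Fin n) ℝ, L X = X *ᵥ b := fun X => rfl
  calc ∫ σ in s..T, (exp ((T - σ) • A) * (M - A) * exp ((σ - s) • M)) *ᵥ b
      = ∫ σ in s..T, L (exp ((T - σ) • A) * (M - A) * exp ((σ - s) • M)) := by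
        simp_rw [hL]
    _ = L (∫ σ in s..T, (exp ((T - σ) • A) * (M - A) * exp ((σ - s) • M))) :=
        L.intervalIntegral_comp_comm (hcont.intervalIntegrable s T)
    _ = (exp ((T - s) • M)) *ᵥ b - (exp ((T - s) • A)) *ᵥ b := by
        rw [key, hL, Matrix.sub_mulVec]

set_option maxHeartbeats 2000000 in
theorem feedback_reachable_subset_dilation' {n m : ℕ}
    (A : Matrix (Fin n) (Fin n) ℝ) (B : Matrix (Fin n) (Fin m) ℝ)
    (C : Matrix (Fin m) (Fin n) ℝ)
    (U : Set (Fin m → ℝ)) (hUc : IsCompact U) (hUconv : Convex ℝ U)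
    (hUint : (interior U).Nonempty) (hUsymm : U = -U) :
    ∃ c > (0:ℝ), ∃ T₀ > (0:ℝ), ∀ T : ℝ, 0 < T → T ≤ T₀ →
      { x | ∃ u : ℝ → Fin m → ℝ, Measurable u ∧ (∀ s, u s ∈ U) ∧
          x = ∫ s in (0:ℝ)..T, (exp ((T - s) • (A + B * C))) *ᵥ (B *ᵥ u s) } ⊆
      (1 + c * T) • { x | ∃ u : ℝ → Fin m → ℝ, Measurable u ∧ (∀ s, u s ∈ U) ∧
          x = ∫ s in (0:ℝ)..T, (exp ((T - s) • A)) *ᵥ (B *ᵥ u s) } := by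
  letI : SeminormedRing (Matrix (Fin n) (Fin n) ℝ) := Matrix.linftyOpSemiNormedRing
  letI : NormedRing (Matrix (Fin n) (Fin n) ℝ) := Matrix.linftyOpNormedRing
  letI : NormedAlgebra ℝ (Matrix (Fin n) (Fin n) ℝ) := Matrix.linftyOpNormedAlgebra
  letI : NormedAlgebra ℚ (Matrix (Fin n) (Fin n) ℝ) := Matrix.linftyOpNormedAlgebra
  set M : Matrix (Fin n) (Fin n) ℝ := A + B * C with hM
  have hMA : M - A = B * C := by rw [hM]; exact add_sub_cancel_left A (B * C)
  -- a closed ball inside U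
  obtain ⟨x₀, hx₀⟩ := hUint
  obtain ⟨ε, hε, hball⟩ := Metric.mem_nhds_iff.mp (mem_interior_iff_mem_nhds.mp hx₀)
  set r : ℝ := ε / 2 with hr
  have hrpos : 0 < r := by positivity
  have hrU : Metric.closedBall (0 : Fin m → ℝ) r ⊆ U := by
    intro y hy
    have hy' : ‖y‖ ≤ r := by simpa using hy
    have hyε : ‖y‖ < ε := lt_of_le_of_lt hy' (by rw [hr]; linarith)
    have h₁ : x₀ + y ∈ U := hball (by
      rw [Metric.mem_ball, dist_eq_norm, add_sub_cancel_left]; exact hyε)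
    have h₂ : -x₀ + y ∈ U := by
      have hx2 : x₀ - y ∈ U := hball (by
        rw [Metric.mem_ball, dist_eq_norm, sub_sub_cancel_left, norm_neg]; exact hyε)
      rw [hUsymm, Set.mem_neg]
      have : -(-x₀ + y) = x₀ - y := by abel
      rw [this]; exact hx2
    have hmem := hUconv h₁ h₂ (by norm_num : (0:ℝ) ≤ 1/2) (by norm_num : (0:ℝ) ≤ 1/2)
      (by norm_num)
    have heq : (1/2 : ℝ) • (x₀ + y) + (1/2 : ℝ) • (-x₀ + y) = y := by module
    rwa [heq] at hmem
  -- uniform bounds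
  obtain ⟨K, hK0, hK⟩ := exists_bound_of_compact
    ((isCompact_Icc (a := (-1:ℝ)) (b := 1)).prod hUc)
    (f := fun p : ℝ × (Fin m → ℝ) => exp (p.1 • M) *ᵥ (B *ᵥ p.2))
    (continuous_mulVec_comp (exp_continuous.comp (continuous_fst.smul continuous_const))
      (continuous_mulVec_comp continuous_const continuous_snd))
  obtain ⟨KA, hKA0, hKA⟩ := exists_bound_of_compact
    ((isCompact_Icc (a := (-1:ℝ)) (b := 1)).prod hUc)
    (f := fun p : ℝ × (Fin m → ℝ) => exp (p.1 • A) *ᵥ (B *ᵥ p.2))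
    (continuous_mulVec_comp (exp_continuous.comp (continuous_fst.smul continuous_const))
      (continuous_mulVec_comp continuous_const continuous_snd))
  obtain ⟨Kg, hKg0, hKg⟩ := exists_bound_of_compact
    (((isCompact_Icc (a := (-1:ℝ)) (b := 1)).prod (isCompact_Icc (a := (-1:ℝ)) (b := 1))).prod
      hUc)
    (f := fun p : (ℝ × ℝ) × (Fin m → ℝ) =>
      (exp (p.1.1 • A) * (B * C) * exp (p.1.2 • M)) *ᵥ (B *ᵥ p.2))
    (continuous_mulVec_comp
      (((exp_continuous.comp ((continuous_fst.comp continuous_fst).smul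
          continuous_const)).mul continuous_const).mul
        (exp_continuous.comp ((continuous_snd.comp continuous_fst).smul continuous_const)))
      (continuous_mulVec_comp continuous_const continuous_snd))
  set CL : (Fin n → ℝ) →L[ℝ] (Fin m → ℝ) := LinearMap.toContinuousLinearMap (Matrix.mulVecLin C)
    with hCLdef
  set κ : ℝ := ‖CL‖ with hκ
  have hκ0 : 0 ≤ κ := norm_nonneg _
  have hCL : ∀ y, ‖C *ᵥ y‖ ≤ κ * ‖y‖ := fun y => by
    have h := CL.le_opNorm y
    simpa only [hCLdef, LinearMap.coe_toContinuousLinearMap', Matrix.mulVecLin_apply]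
      using h
  set c : ℝ := (κ * K + 1) / r with hc
  have hcpos : 0 < c := div_pos (by positivity) hrpos
  refine ⟨c, hcpos, 1, one_pos, fun T hT0 hT1 => ?_⟩
  rintro x ⟨u, hum, huU, hxe⟩
  have hT0' : (0:ℝ) ≤ T := hT0.le
  have hcT : 0 < 1 + c * T := by nlinarith
  have hcT0 : 0 < c * T := mul_pos hcpos hT0
  -- entries of exp are measurable/continuous helpers
  have hproj : ∀ i j : Fin n, Continuous fun X : Matrix (Fin n) (Fin n) ℝ => X i j :=
    fun i j => (continuous_apply_apply i j : _)
  have hent : ∀ (N : Matrix (Fin n) (Fin n) ℝ) (φ : ℝ → ℝ), Continuous φ →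
      ∀ i j, Measurable fun s : ℝ => (exp (φ s • N)) i j := fun N φ hφ i j =>
    ((hproj i j).comp (exp_continuous.comp (hφ.smul continuous_const))).measurable
  have hbm : Measurable fun s => B *ᵥ u s :=
    measurable_mulVec (fun i j => measurable_const) hum
  -- the feedback trajectory
  set xt : ℝ → Fin n → ℝ := fun σ => ∫ s in (0:ℝ)..σ, exp ((σ - s) • M) *ᵥ (B *ᵥ u s)
    with hxt
  -- continuity of xt
  have hprim : ∀ a b' : ℝ, IntervalIntegrable (fun s => exp ((-s) • M) *ᵥ (B *ᵥ u s))
      volume a b' := by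
    intro a b'
    obtain ⟨R, _, hR⟩ := exists_bound_of_compact
      (((isCompact_uIcc (a := a) (b := b')).neg).prod hUc)
      (f := fun p : ℝ × (Fin m → ℝ) => exp (p.1 • M) *ᵥ (B *ᵥ p.2))
      (continuous_mulVec_comp (exp_continuous.comp (continuous_fst.smul continuous_const))
        (continuous_mulVec_comp continuous_const continuous_snd))
    refine II_of_bounded (measurable_mulVec (hent M _ continuous_neg) hbm).aestronglyMeasurable
      (R := R) ?_
    intro s hs
    exact hR ⟨-s, u s⟩ (Set.mk_mem_prod (Set.neg_mem_neg.mpr (uIoc_subset_uIcc hs)) (huU s))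
  have hPc : Continuous fun σ : ℝ => ∫ s in (0:ℝ)..σ, exp ((-s) • M) *ᵥ (B *ᵥ u s) :=
    intervalIntegral.continuous_primitive hprim 0
  have hxtP : xt = fun σ => exp (σ • M) *ᵥ
      (∫ s in (0:ℝ)..σ, exp ((-s) • M) *ᵥ (B *ᵥ u s)) := by
    funext σ
    rw [hxt]
    have h1 : ∀ s : ℝ, exp ((σ - s) • M) *ᵥ (B *ᵥ u s) =
        exp (σ • M) *ᵥ (exp ((-s) • M) *ᵥ (B *ᵥ u s)) := by
      intro s
      have hsm : (σ - s) • M = σ • M + (-s) • M := by rw [← add_smul, ← sub_eq_add_neg]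
      rw [hsm, Matrix.exp_add_of_commute _ _ (((Commute.refl M).smul_left σ).smul_right (-s)),
        ← Matrix.mulVec_mulVec]
    simp_rw [h1]
    have := (LinearMap.toContinuousLinearMap
      (Matrix.mulVecLin (exp (σ • M)))).intervalIntegral_comp_comm (hprim 0 σ)
    exact this
  have hxtc : Continuous xt := by
    rw [hxtP]
    exact continuous_mulVec_comp
      (exp_continuous.comp (continuous_id.smul continuous_const)) hPc
  -- bound on xt
  have hxtbd : ∀ σ ∈ Icc (0:ℝ) T, ‖xt σ‖ ≤ K * σ := by
    intro σ hσ
    have hbd : ∀ s ∈ Set.uIoc (0:ℝ) σ, ‖exp ((σ - s) • M) *ᵥ (B *ᵥ u s)‖ ≤ K := by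
      intro s hs
      rw [Set.uIoc_of_le hσ.1] at hs
      refine hK ⟨σ - s, u s⟩ (Set.mk_mem_prod ⟨?_, ?_⟩ (huU s))
      · have := hs.2; have := hσ.2; linarith [hs.1]
      · have := hs.1; have := hσ.2; linarith [hT1]
    have := intervalIntegral.norm_integral_le_of_norm_le_const hbd
    rw [hxt]
    rw [sub_zero, abs_of_nonneg hσ.1] at this
    exact this
  -- interval integrability of the main integrands
  have hI1 : IntervalIntegrable (fun s => exp ((T - s) • M) *ᵥ (B *ᵥ u s)) volume 0 T := by
    refine II_of_bounded (measurable_mulVec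
      (hent M _ (continuous_const.sub continuous_id)) hbm).aestronglyMeasurable (R := K) ?_
    intro s hs
    rw [Set.uIoc_of_le hT0'] at hs
    refine hK ⟨T - s, u s⟩ (Set.mk_mem_prod ⟨?_, ?_⟩ (huU s))
    · linarith [hs.2]
    · linarith [hs.1, hT1]
  have hI2 : IntervalIntegrable (fun σ => exp ((T - σ) • A) *ᵥ (B *ᵥ u σ)) volume 0 T := by
    refine II_of_bounded (measurable_mulVec
      (hent A _ (continuous_const.sub continuous_id)) hbm).aestronglyMeasurable (R := KA) ?_
    intro s hs
    rw [Set.uIoc_of_le hT0'] at hs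
    refine hKA ⟨T - s, u s⟩ (Set.mk_mem_prod ⟨?_, ?_⟩ (huU s))
    · linarith [hs.2]
    · linarith [hs.1, hT1]
  have hI3 : IntervalIntegrable (fun σ => exp ((T - σ) • A) *ᵥ ((B * C) *ᵥ xt σ))
      volume 0 T := by
    refine Continuous.intervalIntegrable ?_ _ _
    exact continuous_mulVec_comp
      (exp_continuous.comp ((continuous_const.sub continuous_id).smul continuous_const))
      (continuous_mulVec_comp continuous_const hxtc)
  -- the kernel for Fubini
  set g : ℝ → ℝ → (Fin n → ℝ) := fun s σ =>
    (exp ((T - σ) • A) * (B * C) * exp ((σ - s) • M)) *ᵥ (B *ᵥ u s) with hg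
  have hKc : Continuous fun p : ℝ × ℝ =>
      exp ((T - p.2) • A) * (B * C) * exp ((p.2 - p.1) • M) :=
    ((exp_continuous.comp ((continuous_const.sub continuous_snd).smul continuous_const)).mul
      continuous_const).mul
      (exp_continuous.comp ((continuous_snd.sub continuous_fst).smul continuous_const))
  have hgm : Measurable (Function.uncurry g) := by
    refine measurable_mulVec (fun i j => ((hproj i j).comp hKc).measurable) ?_
    exact hbm.comp measurable_fst
  have hgb : ∀ s ∈ Icc (0:ℝ) T, ∀ σ ∈ Icc (0:ℝ) T, ‖g s σ‖ ≤ Kg := by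
    intro s hs σ hσ
    refine hKg ⟨⟨T - σ, σ - s⟩, u s⟩ (Set.mk_mem_prod (Set.mk_mem_prod ⟨?_, ?_⟩ ⟨?_, ?_⟩)
      (huU s))
    · linarith [hσ.2]
    · linarith [hσ.1, hT1]
    · linarith [hσ.1, hs.2, hT1]
    · linarith [hσ.2, hs.1, hT1]
  -- the I3 integrand as an inner integral
  have hI3fun : ∀ σ ∈ Icc (0:ℝ) T, exp ((T - σ) • A) *ᵥ ((B * C) *ᵥ xt σ) =
      ∫ s in (0:ℝ)..σ, g s σ := by
    intro σ hσ
    have hInner : IntervalIntegrable (fun s => exp ((σ - s) • M) *ᵥ (B *ᵥ u s))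
        volume 0 σ := by
      refine II_of_bounded (measurable_mulVec
        (hent M _ (continuous_const.sub continuous_id)) hbm).aestronglyMeasurable (R := K) ?_
      intro s hs
      rw [Set.uIoc_of_le hσ.1] at hs
      refine hK ⟨σ - s, u s⟩ (Set.mk_mem_prod ⟨?_, ?_⟩ (huU s))
      · linarith [hs.2]
      · linarith [hs.1, hσ.2, hT1]
    have hcomm := (LinearMap.toContinuousLinearMap
      (Matrix.mulVecLin (exp ((T - σ) • A) * (B * C)))).intervalIntegral_comp_comm hInner
    calc exp ((T - σ) • A) *ᵥ ((B * C) *ᵥ xt σ)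
        = (exp ((T - σ) • A) * (B * C)) *ᵥ xt σ := by rw [Matrix.mulVec_mulVec]
      _ = ∫ s in (0:ℝ)..σ, (exp ((T - σ) • A) * (B * C)) *ᵥ
            (exp ((σ - s) • M) *ᵥ (B *ᵥ u s)) := by
          rw [hxt]; exact hcomm.symm
      _ = ∫ s in (0:ℝ)..σ, g s σ := by
          refine intervalIntegral.integral_congr fun s _ => ?_
          rw [hg]
          simp only [Matrix.mulVec_mulVec, Matrix.mul_assoc]
  -- key identity via Fubini and FTC
  have hI3int : (∫ σ in (0:ℝ)..T, exp ((T - σ) • A) *ᵥ ((B * C) *ᵥ xt σ)) =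
      ∫ s in (0:ℝ)..T, (exp ((T - s) • M) *ᵥ (B *ᵥ u s) -
        exp ((T - s) • A) *ᵥ (B *ᵥ u s)) := by
    rw [intervalIntegral.integral_congr (g := fun σ => ∫ s in (0:ℝ)..σ, g s σ)
      (fun σ hσ => hI3fun σ (by rwa [Set.uIcc_of_le hT0'] at hσ))]
    rw [← triangle_swap hT0' hgm hgb]
    refine intervalIntegral.integral_congr fun s _ => ?_
    have hker := exp_kernel_integral_vec A M (B *ᵥ u s) s T
    rw [hMA] at hker
    exact hker
  have hkey : (∫ s in (0:ℝ)..T, exp ((T - s) • M) *ᵥ (B *ᵥ u s)) =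
      ∫ σ in (0:ℝ)..T, exp ((T - σ) • A) *ᵥ (B *ᵥ (u σ + C *ᵥ xt σ)) := by
    have hsplit : ∀ σ : ℝ, exp ((T - σ) • A) *ᵥ (B *ᵥ (u σ + C *ᵥ xt σ)) =
        exp ((T - σ) • A) *ᵥ (B *ᵥ u σ) + exp ((T - σ) • A) *ᵥ ((B * C) *ᵥ xt σ) := by
      intro σ
      simp only [Matrix.mulVec_add, Matrix.mulVec_mulVec, Matrix.mul_assoc]
    simp_rw [hsplit]
    rw [intervalIntegral.integral_add hI2 hI3, hI3int,
      intervalIntegral.integral_sub hI1 hI2]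
    abel
  -- the scaled control
  have hscale : ∀ y : Fin m → ℝ, ‖y‖ ≤ (c * T) * r → y ∈ (c * T) • U := by
    intro y hy
    refine Set.mem_smul_set.mpr ⟨(c * T)⁻¹ • y, hrU ?_, smul_inv_smul₀ hcT0.ne' y⟩
    rw [Metric.mem_closedBall, dist_zero_right, norm_smul, norm_inv, Real.norm_eq_abs,
      abs_of_pos hcT0]
    rw [inv_mul_le_iff₀ hcT0]
    calc ‖y‖ ≤ c * T * r := hy
      _ = c * T * r := rfl
  set cl : ℝ → ℝ := fun σ => max 0 (min σ T) with hcl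
  have hclc : Continuous cl := continuous_const.max (continuous_id.min continuous_const)
  have hclmem : ∀ σ, cl σ ∈ Icc (0:ℝ) T := fun σ =>
    ⟨le_max_left _ _, max_le hT0' (min_le_right _ _)⟩
  have hcleq : ∀ σ ∈ Icc (0:ℝ) T, cl σ = σ := by
    intro σ hσ
    rw [hcl]
    simp only
    rw [min_eq_left hσ.2, max_eq_right hσ.1]
  set v : ℝ → Fin m → ℝ := fun σ => (1 + c * T)⁻¹ • (u σ + C *ᵥ xt (cl σ)) with hv
  have hvm : Measurable v := by
    exact (hum.add (measurable_mulVec (k := fun _ => C)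
      (fun i j => measurable_const) ((hxtc.comp hclc).measurable))).const_smul (1 + c * T)⁻¹
  have hwmem : ∀ σ, u σ + C *ᵥ xt (cl σ) ∈ (1 + c * T) • U := by
    intro σ
    have hCx : ‖C *ᵥ xt (cl σ)‖ ≤ c * T * r := by
      have h1 : ‖C *ᵥ xt (cl σ)‖ ≤ κ * ‖xt (cl σ)‖ := hCL _
      have h2 : ‖xt (cl σ)‖ ≤ K * cl σ := hxtbd _ (hclmem σ)
      have h3 : K * cl σ ≤ K * T := mul_le_mul_of_nonneg_left (hclmem σ).2 hK0
      have hcr : c * r = κ * K + 1 := div_mul_cancel₀ _ hrpos.ne'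
      have : κ * (K * T) ≤ c * T * r := by nlinarith [norm_nonneg (xt (cl σ))]
      calc ‖C *ᵥ xt (cl σ)‖ ≤ κ * (K * T) := le_trans h1 (by nlinarith)
        _ ≤ c * T * r := this
    have hmem1 : C *ᵥ xt (cl σ) ∈ (c * T) • U := hscale _ hCx
    rw [hUconv.add_smul zero_le_one hcT0.le]
    rw [one_smul]
    exact Set.add_mem_add (huU σ) hmem1
  have hvU : ∀ σ, v σ ∈ U := by
    intro σ
    obtain ⟨y, hyU, hy⟩ := Set.mem_smul_set.mp (hwmem σ)
    rw [hv]
    simp only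
    rw [← hy, inv_smul_smul₀ hcT.ne']
    exact hyU
  -- final assembly
  have h2 : (∫ σ in (0:ℝ)..T, exp ((T - σ) • A) *ᵥ (B *ᵥ (u σ + C *ᵥ xt σ))) =
      ∫ σ in (0:ℝ)..T, (1 + c * T) • (exp ((T - σ) • A) *ᵥ (B *ᵥ v σ)) := by
    refine intervalIntegral.integral_congr fun σ hσ => ?_
    rw [Set.uIcc_of_le hT0'] at hσ
    have h1 : u σ + C *ᵥ xt σ = (1 + c * T) • v σ := by
      rw [hv]
      simp only
      rw [hcleq σ hσ, smul_inv_smul₀ hcT.ne']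
    rw [h1, Matrix.mulVec_smul, Matrix.mulVec_smul]
  have hfin : x = (1 + c * T) • ∫ σ in (0:ℝ)..T, exp ((T - σ) • A) *ᵥ (B *ᵥ v σ) := by
    rw [hxe, hkey, h2, intervalIntegral.integral_smul]
  rw [hfin]
  exact Set.smul_mem_smul_set ⟨v, hvm, hvU, rfl⟩

end FeedbackAux

/-- **The feedback reachable set is contained in a small dilation of the original one.**
If `D(T)`, `D̃(T)` are the reachable sets of `ẋ = Ax + Bu` and of the feedback system
`ẋ = (A + BC)x + Bu` (`u ∈ U`, a centrally symmetric convex body), then there are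
`c, T₀ > 0` with `D̃(T) ⊆ (1 + cT)·D(T)` for all `0 < T ≤ T₀`. -/
theorem feedback_reachable_subset_dilation {n m : ℕ}
    (A : Matrix (Fin n) (Fin n) ℝ) (B : Matrix (Fin n) (Fin m) ℝ)
    (C : Matrix (Fin m) (Fin n) ℝ)
    (U : Set (Fin m → ℝ)) (hU : IsSymConvexBody U) :
    ∃ c > (0:ℝ), ∃ T₀ > (0:ℝ), ∀ T : ℝ, 0 < T → T ≤ T₀ →
      reachable (A + B * C) B U T ⊆ (1 + c * T) • reachable A B U T := by
  obtain ⟨hUc, hUconv, hUint, hUsymm⟩ := hU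
  exact feedback_reachable_subset_dilation' A B C U hUc hUconv hUint hUsymm
end
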